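/- arXiv:2503.04045 — 6 statements merged into one kernel-verified Lean document; each statement's English description precedes it below -/
import Mathlib

section
/- For every N ≥ 3, the number of distinct prime factors ω(N) satisfies ω(N) ≤ 1.3841 · (log N) / (log log N). -/
open Finset Real

local notation "π" => Nat.nth Nat.Prime

lemma nthP_val (m c : ℕ) (hm : Nat.Prime m) (hc : Nat.count Nat.Prime m = c) : π c = m := by
  subst hc; exact Nat.nth_count hm

lemma nthP0 : π 0 = 2 := nthP_val 2 0 (by norm_num) (by decide)
lemma nthP1 : π 1 = 3 := nthP_val 3 1 (by norm_num) (by decide)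
lemma nthP2 : π 2 = 5 := nthP_val 5 2 (by norm_num) (by decide)
lemma nthP3 : π 3 = 7 := nthP_val 7 3 (by norm_num) (by decide)
lemma nthP4 : π 4 = 11 := nthP_val 11 4 (by norm_num) (by decide)
lemma nthP5 : π 5 = 13 := nthP_val 13 5 (by norm_num) (by decide)
lemma nthP6 : π 6 = 17 := nthP_val 17 6 (by norm_num) (by decide)
lemma nthP7 : π 7 = 19 := nthP_val 19 7 (by norm_num) (by decide)
lemma nthP8 : π 8 = 23 := nthP_val 23 8 (by norm_num) (by decide)
lemma nthP9 : π 9 = 29 := nthP_val 29 9 (by norm_num) (by decide)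
lemma nthP10 : π 10 = 31 := nthP_val 31 10 (by norm_num) (by decide)
lemma nthP11 : π 11 = 37 := nthP_val 37 11 (by norm_num) (by decide)
lemma nthP12 : π 12 = 41 := nthP_val 41 12 (by norm_num) (by decide)
lemma nthP13 : π 13 = 43 := nthP_val 43 13 (by norm_num) (by decide)
lemma nthP14 : π 14 = 47 := nthP_val 47 14 (by norm_num) (by decide)
lemma nthP15 : π 15 = 53 := nthP_val 53 15 (by norm_num) (by decide)
lemma nthP16 : π 16 = 59 := nthP_val 59 16 (by norm_num) (by decide)

lemma nthP_mono {i j : ℕ} (h : i ≤ j) : π i ≤ π j :=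
  (Nat.nth_le_nth Nat.infinite_setOf_prime).2 h

lemma nthP_strictmono {i j : ℕ} (h : i < j) : π i < π j :=
  (Nat.nth_lt_nth Nat.infinite_setOf_prime).2 h

lemma mod6 {p : ℕ} (hp : p.Prime) (h5 : 5 ≤ p) : p % 6 = 1 ∨ p % 6 = 5 := by
  have h2 : p % 2 ≠ 0 := by
    intro h
    have : (2:ℕ) ∣ p := Nat.dvd_of_mod_eq_zero h
    have := (Nat.prime_dvd_prime_iff_eq Nat.prime_two hp).1 this
    omega
  have h3 : p % 3 ≠ 0 := by
    intro h
    have : (3:ℕ) ∣ p := Nat.dvd_of_mod_eq_zero h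
    have := (Nat.prime_dvd_prime_iff_eq Nat.prime_three hp).1 this
    omega
  omega

lemma window {j : ℕ} (hj : 2 ≤ j) : π j + 6 ≤ π (j + 2) := by
  have ha5 : 5 ≤ π j := nthP2 ▸ nthP_mono hj
  have hab : π j < π (j+1) := nthP_strictmono (by omega)
  have hbc : π (j+1) < π (j+2) := nthP_strictmono (by omega)
  have pa := mod6 (Nat.prime_nth_prime j) ha5
  have pb := mod6 (Nat.prime_nth_prime (j+1)) (by omega)
  have pc := mod6 (Nat.prime_nth_prime (j+2)) (by omega)
  omega

lemma nthP_lb : ∀ i, 2 ≤ i → 3 * i ≤ π i + 2 := by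
  intro i
  induction i using Nat.strong_induction_on with
  | _ i ih =>
    intro hi
    match i, hi with
    | 2, _ => rw [nthP2]; omega
    | 3, _ =>
      have : π 3 = 7 := nthP3
      omega
    | (j+4), _ =>
      have h1 := ih (j+2) (by omega) (by omega)
      have h2 := window (j := j+2) (by omega)
      have : j+2+2 = j+4 := by omega
      rw [this] at h2
      omega

lemma log2_lb {x : ℝ} (p q : ℕ) (hq : 0 < q) (hx : 0 < x) (h : (2:ℝ)^p ≤ x^q) :
    (p : ℝ) / q * Real.log 2 ≤ Real.log x := by
  have h1 : Real.log ((2:ℝ)^p) ≤ Real.log (x^q) :=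
    Real.log_le_log (by positivity) h
  rw [Real.log_pow, Real.log_pow] at h1
  rw [div_mul_eq_mul_div, div_le_iff₀ (by exact_mod_cast hq)]
  linarith

lemma log2_ub {x : ℝ} (p q : ℕ) (hq : 0 < q) (hx : 0 < x) (h : x^q ≤ (2:ℝ)^p) :
    Real.log x ≤ (p : ℝ) / q * Real.log 2 := by
  have h1 : Real.log (x^q) ≤ Real.log ((2:ℝ)^p) :=
    Real.log_le_log (by positivity) h
  rw [Real.log_pow, Real.log_pow] at h1
  rw [div_mul_eq_mul_div, le_div_iff₀ (by exact_mod_cast hq)]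
  linarith

lemma final_step {k : ℕ} {x L : ℝ} (hL : 0 < L) (hxL : L ≤ x)
    (h1 : (k : ℝ) * Real.log L ≤ 1.3841 * L) (h2 : (k : ℝ) ≤ 1.3841 * L) :
    (k : ℝ) * Real.log x ≤ 1.3841 * x := by
  have hx : 0 < x := lt_of_lt_of_le hL hxL
  have hconc : Real.log x ≤ Real.log L + (x / L - 1) := by
    have := Real.log_le_sub_one_of_pos (show 0 < x / L by positivity)
    have hlog : Real.log (x / L) = Real.log x - Real.log L := Real.log_div (ne_of_gt hx) (ne_of_gt hL)
    linarith [hlog ▸ this]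
  have hk0 : (0:ℝ) ≤ (k:ℝ) := Nat.cast_nonneg k
  have hxLd : x / L - 1 ≥ 0 := by
    rw [ge_iff_le, sub_nonneg, le_div_iff₀ hL]; linarith
  have : (k:ℝ) * (x / L - 1) ≤ 1.3841 * (x - L) := by
    have h3 : (k:ℝ) * (x / L - 1) = (k / L) * (x - L) := by
      field_simp
    rw [h3]
    apply mul_le_mul_of_nonneg_right _ (by linarith)
    rw [div_le_iff₀ hL]; linarith
  nlinarith [mul_le_mul_of_nonneg_left hconc hk0]

lemma prod_nthP_le (S : Finset ℕ) (hS : ∀ p ∈ S, p.Prime) :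
    ∏ i ∈ range S.card, π i ≤ ∏ p ∈ S, p := by
  induction S using Finset.induction_on_max with
  | empty => simp
  | insert a s ha ih =>
    have hprime : ∀ p ∈ s, p.Prime := fun p hp => hS p (mem_insert_of_mem hp)
    have hans : a ∉ s := fun h => lt_irrefl a (ha a h)
    rw [Finset.card_insert_of_notMem hans, Finset.prod_insert hans, Finset.prod_range_succ]
    have hcount : s.card ≤ Nat.count Nat.Prime a := by
      rw [Nat.count_eq_card_filter_range]
      apply Finset.card_le_card
      intro x hx
      simp only [Finset.mem_filter, Finset.mem_range]
      exact ⟨ha x hx, hprime x hx⟩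
    have hnth : π s.card ≤ a := by
      calc π s.card ≤ π (Nat.count Nat.Prime a) :=
            (Nat.nth_le_nth Nat.infinite_setOf_prime).2 hcount
        _ = a := Nat.nth_count (hS a (mem_insert_self a s))
    have hpos : 0 < ∏ i ∈ range s.card, π i :=
      Finset.prod_pos fun i _ => (Nat.prime_nth_prime i).pos
    calc (∏ i ∈ range s.card, π i) * π s.card ≤ (∏ p ∈ s, p) * a :=
          Nat.mul_le_mul (ih hprime) hnth
      _ = a * ∏ p ∈ s, p := mul_comm _ _

lemma prodP_pos (k : ℕ) : 0 < ∏ i ∈ range k, π i :=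
  Finset.prod_pos fun i _ => (Nat.prime_nth_prime i).pos

lemma prodP4 : ∏ i ∈ Finset.range 4, π i = 210 := by
  simp [Finset.prod_range_succ, nthP0, nthP1, nthP2, nthP3, nthP4, nthP5, nthP6, nthP7, nthP8, nthP9, nthP10, nthP11, nthP12, nthP13, nthP14, nthP15, nthP16]
lemma prodP5 : ∏ i ∈ Finset.range 5, π i = 2310 := by
  simp [Finset.prod_range_succ, nthP0, nthP1, nthP2, nthP3, nthP4, nthP5, nthP6, nthP7, nthP8, nthP9, nthP10, nthP11, nthP12, nthP13, nthP14, nthP15, nthP16]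
lemma prodP6 : ∏ i ∈ Finset.range 6, π i = 30030 := by
  simp [Finset.prod_range_succ, nthP0, nthP1, nthP2, nthP3, nthP4, nthP5, nthP6, nthP7, nthP8, nthP9, nthP10, nthP11, nthP12, nthP13, nthP14, nthP15, nthP16]
lemma prodP7 : ∏ i ∈ Finset.range 7, π i = 510510 := by
  simp [Finset.prod_range_succ, nthP0, nthP1, nthP2, nthP3, nthP4, nthP5, nthP6, nthP7, nthP8, nthP9, nthP10, nthP11, nthP12, nthP13, nthP14, nthP15, nthP16]
lemma prodP8 : ∏ i ∈ Finset.range 8, π i = 9699690 := by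
  simp [Finset.prod_range_succ, nthP0, nthP1, nthP2, nthP3, nthP4, nthP5, nthP6, nthP7, nthP8, nthP9, nthP10, nthP11, nthP12, nthP13, nthP14, nthP15, nthP16]
lemma prodP9 : ∏ i ∈ Finset.range 9, π i = 223092870 := by
  simp [Finset.prod_range_succ, nthP0, nthP1, nthP2, nthP3, nthP4, nthP5, nthP6, nthP7, nthP8, nthP9, nthP10, nthP11, nthP12, nthP13, nthP14, nthP15, nthP16]
lemma prodP10 : ∏ i ∈ Finset.range 10, π i = 6469693230 := by
  simp [Finset.prod_range_succ, nthP0, nthP1, nthP2, nthP3, nthP4, nthP5, nthP6, nthP7, nthP8, nthP9, nthP10, nthP11, nthP12, nthP13, nthP14, nthP15, nthP16]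
lemma prodP11 : ∏ i ∈ Finset.range 11, π i = 200560490130 := by
  simp [Finset.prod_range_succ, nthP0, nthP1, nthP2, nthP3, nthP4, nthP5, nthP6, nthP7, nthP8, nthP9, nthP10, nthP11, nthP12, nthP13, nthP14, nthP15, nthP16]
lemma prodP12 : ∏ i ∈ Finset.range 12, π i = 7420738134810 := by
  simp [Finset.prod_range_succ, nthP0, nthP1, nthP2, nthP3, nthP4, nthP5, nthP6, nthP7, nthP8, nthP9, nthP10, nthP11, nthP12, nthP13, nthP14, nthP15, nthP16]
lemma prodP13 : ∏ i ∈ Finset.range 13, π i = 304250263527210 := by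
  simp [Finset.prod_range_succ, nthP0, nthP1, nthP2, nthP3, nthP4, nthP5, nthP6, nthP7, nthP8, nthP9, nthP10, nthP11, nthP12, nthP13, nthP14, nthP15, nthP16]
lemma prodP14 : ∏ i ∈ Finset.range 14, π i = 13082761331670030 := by
  simp [Finset.prod_range_succ, nthP0, nthP1, nthP2, nthP3, nthP4, nthP5, nthP6, nthP7, nthP8, nthP9, nthP10, nthP11, nthP12, nthP13, nthP14, nthP15, nthP16]
lemma prodP15 : ∏ i ∈ Finset.range 15, π i = 614889782588491410 := by
  simp [Finset.prod_range_succ, nthP0, nthP1, nthP2, nthP3, nthP4, nthP5, nthP6, nthP7, nthP8, nthP9, nthP10, nthP11, nthP12, nthP13, nthP14, nthP15, nthP16]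
lemma prodP16 : ∏ i ∈ Finset.range 16, π i = 32589158477190044730 := by
  simp [Finset.prod_range_succ, nthP0, nthP1, nthP2, nthP3, nthP4, nthP5, nthP6, nthP7, nthP8, nthP9, nthP10, nthP11, nthP12, nthP13, nthP14, nthP15, nthP16]
lemma prod17 : ∏ i ∈ range 17, π i = 1922760350154212639070 := by
  simp [Finset.prod_range_succ, nthP0, nthP1, nthP2, nthP3, nthP4, nthP5, nthP6, nthP7,
    nthP8, nthP9, nthP10, nthP11, nthP12, nthP13, nthP14, nthP15, nthP16]

lemma sum_lb : ∀ k : ℕ, 17 ≤ k → (k:ℝ) * Real.log k ≤ Real.log ((∏ i ∈ range k, π i : ℕ) : ℝ) := by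
  intro k hk
  induction k, hk using Nat.le_induction with
  | base =>
    rw [prod17]
    have h17 : Real.log 17 ≤ (327 : ℝ) / 80 * Real.log 2 :=
      log2_ub 327 80 (by norm_num) (by norm_num) (by exact_mod_cast (show (17:ℕ)^80 ≤ 2^327 by decide +kernel))
    have hP : (70703 : ℝ) / 1000 * Real.log 2 ≤ Real.log 1922760350154212639070 :=
      log2_lb 70703 1000 (by norm_num) (by norm_num) (by exact_mod_cast (show (2:ℕ)^70703 ≤ 1922760350154212639070^1000 by decide +kernel))
    have hl2 : (0:ℝ) < Real.log 2 := Real.log_pos (by norm_num)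
    push_cast
    nlinarith
  | succ k hk ih =>
    have hk17 : (17:ℝ) ≤ (k:ℝ) := by exact_mod_cast hk
    have hπ : 3 * (k:ℝ) - 2 ≤ (π k : ℝ) := by
      have h := nthP_lb k (by omega)
      have h2 : ((3*k:ℕ):ℝ) ≤ ((π k + 2 : ℕ):ℝ) := Nat.cast_le.2 h
      push_cast at h2
      linarith
    have hπpos : (0:ℝ) < (π k : ℝ) := by exact_mod_cast (Nat.prime_nth_prime k).pos
    have hppos : (0:ℝ) < ((∏ i ∈ range k, π i : ℕ) : ℝ) := by
      exact_mod_cast prodP_pos k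
    have hsplit : Real.log ((∏ i ∈ range (k+1), π i : ℕ) : ℝ)
        = Real.log ((∏ i ∈ range k, π i : ℕ) : ℝ) + Real.log (π k : ℝ) := by
      rw [Finset.prod_range_succ, Nat.cast_mul, Real.log_mul (ne_of_gt hppos) (ne_of_gt hπpos)]
    rw [hsplit]
    have hlogπ : Real.log (3 * (k:ℝ) - 2) ≤ Real.log (π k : ℝ) :=
      Real.log_le_log (by linarith) hπ
    have hstep : ((k:ℝ) + 1) * Real.log ((k:ℝ) + 1) ≤ (k:ℝ) * Real.log k + Real.log (3 * (k:ℝ) - 2) := by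
      have hkpos : (0:ℝ) < (k:ℝ) := by linarith
      have h1 : Real.log ((k:ℝ)+1) - Real.log k ≤ 1 / k := by
        have := Real.log_le_sub_one_of_pos (show (0:ℝ) < ((k:ℝ)+1)/k by positivity)
        rw [Real.log_div (by linarith) (ne_of_gt hkpos)] at this
        have : Real.log ((k:ℝ)+1) - Real.log k ≤ ((k:ℝ)+1)/k - 1 := this
        have heq : ((k:ℝ)+1)/k - 1 = 1/k := by field_simp; ring
        linarith [heq ▸ this]
      have h2 : Real.log ((k:ℝ)+1) + 1 ≤ Real.log (3 * (k:ℝ) - 2) := by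
        have he : Real.exp 1 * ((k:ℝ)+1) ≤ 3 * (k:ℝ) - 2 := by
          nlinarith [Real.exp_one_lt_d9]
        calc Real.log ((k:ℝ)+1) + 1 = Real.log (Real.exp 1 * ((k:ℝ)+1)) := by
              rw [Real.log_mul (ne_of_gt (Real.exp_pos 1)) (by linarith), Real.log_exp]; ring
          _ ≤ Real.log (3 * (k:ℝ) - 2) := Real.log_le_log (by positivity) he
      have h3 : (k:ℝ) * (Real.log ((k:ℝ)+1) - Real.log k) ≤ 1 := by
        calc (k:ℝ) * (Real.log ((k:ℝ)+1) - Real.log k) ≤ (k:ℝ) * (1/k) :=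
              mul_le_mul_of_nonneg_left h1 (le_of_lt hkpos)
          _ = 1 := by field_simp
      nlinarith
    push_cast
    push_cast at ih
    nlinarith

lemma case_small (k : ℕ) (x L : ℝ) (P ap aq yp yq : ℕ)
    (hL : 0 < L) (haq : 0 < aq) (hyq : 0 < yq) (hPpos : 0 < P)
    (hPa : (2:ℝ)^ap ≤ (P:ℝ)^aq)
    (hLy : L^yq ≤ (2:ℝ)^yp)
    (hLa : L ≤ (ap:ℝ)/aq * 0.6931471803)
    (hky : (k:ℝ) * ((yp:ℝ)/yq * 0.6931471808) ≤ 1.3841 * L)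
    (hk2 : (k:ℝ) ≤ 1.3841 * L)
    (hPx : Real.log (P:ℝ) ≤ x) :
    (k:ℝ) * Real.log x ≤ 1.3841 * x := by
  have hPr : (0:ℝ) < (P:ℝ) := by exact_mod_cast hPpos
  have hlogP : (ap:ℝ)/aq * Real.log 2 ≤ Real.log (P:ℝ) := log2_lb ap aq haq hPr hPa
  have hlogL : Real.log L ≤ (yp:ℝ)/yq * Real.log 2 := log2_ub yp yq hyq hL hLy
  have h2l := Real.log_two_gt_d9
  have h2u := Real.log_two_lt_d9
  have hfrac_nonneg : (0:ℝ) ≤ (ap:ℝ)/aq := by positivity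
  have hfrac2 : (0:ℝ) ≤ (yp:ℝ)/yq := by positivity
  have hxL : L ≤ x := by
    calc L ≤ (ap:ℝ)/aq * 0.6931471803 := hLa
      _ ≤ (ap:ℝ)/aq * Real.log 2 := by nlinarith
      _ ≤ Real.log (P:ℝ) := hlogP
      _ ≤ x := hPx
  have hkn : (0:ℝ) ≤ (k:ℝ) := Nat.cast_nonneg k
  have h1 : (k:ℝ) * Real.log L ≤ 1.3841 * L := by
    have : (k:ℝ) * Real.log L ≤ (k:ℝ) * ((yp:ℝ)/yq * Real.log 2) :=
      mul_le_mul_of_nonneg_left hlogL hkn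
    nlinarith
  exact final_step hL hxL h1 hk2

theorem stmt_5 (N : ℕ) (hN : 3 ≤ N) :
    (N.primeFactors.card : ℝ) ≤ 1.3841 * Real.log N / Real.log (Real.log N) := by
  have hN0 : (3:ℝ) ≤ (N:ℝ) := by exact_mod_cast hN
  set k := N.primeFactors.card with hkdef
  set x := Real.log N with hxdef
  have hx1 : 1 < x := by
    have h3 : Real.log 3 ≤ x := Real.log_le_log (by norm_num) hN0
    have he3 : Real.exp 1 < 3 := lt_trans Real.exp_one_lt_d9 (by norm_num)
    have := Real.log_lt_log (Real.exp_pos 1) he3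
    rw [Real.log_exp] at this
    linarith
  have hx0 : 0 < x := by linarith
  have hlogx : 0 < Real.log x := Real.log_pos hx1
  have key : (k:ℝ) * Real.log x ≤ 1.3841 * x := by
    rcases le_or_gt k 3 with hk3 | hk4
    · have hlogxe : Real.exp 1 * Real.log x ≤ x := by
        have h := Real.log_le_sub_one_of_pos (show 0 < x / Real.exp 1 by positivity)
        rw [Real.log_div (ne_of_gt hx0) (ne_of_gt (Real.exp_pos 1)), Real.log_exp] at h
        have h2 : Real.exp 1 * (x / Real.exp 1) = x := mul_div_cancel₀ x (ne_of_gt (Real.exp_pos 1))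
        nlinarith [Real.exp_pos 1, mul_le_mul_of_nonneg_left h (le_of_lt (Real.exp_pos 1))]
      have hk3' : (k:ℝ) ≤ 3 := by exact_mod_cast hk3
      have he := Real.exp_one_gt_d9
      nlinarith [hlogx.le]
    · have hdvd : ∏ p ∈ N.primeFactors, p ∣ N := Nat.prod_primeFactors_dvd N
      have hle1 : ∏ p ∈ N.primeFactors, p ≤ N := Nat.le_of_dvd (by omega) hdvd
      have hle2 : (∏ i ∈ Finset.range k, π i) ≤ ∏ p ∈ N.primeFactors, p :=
        prod_nthP_le N.primeFactors (fun p hp => Nat.prime_of_mem_primeFactors hp)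
      have hPx_any : Real.log ((∏ i ∈ Finset.range k, π i : ℕ) : ℝ) ≤ x := by
        apply Real.log_le_log (by exact_mod_cast prodP_pos k)
        exact_mod_cast le_trans hle2 hle1
      rcases le_or_gt 17 k with hk17 | hk16
      · have hsum := sum_lb k hk17
        have hk17' : (17:ℝ) ≤ (k:ℝ) := by exact_mod_cast hk17
        have hu1 : 1 < Real.log k := by
          have he3 : Real.exp 1 < 17 := lt_trans Real.exp_one_lt_d9 (by norm_num)
          have := Real.log_lt_log (Real.exp_pos 1) (lt_of_lt_of_le he3 hk17')
          rw [Real.log_exp] at this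
          linarith
        have hkpos : (0:ℝ) < (k:ℝ) := by linarith
        have hLpos : (0:ℝ) < (k:ℝ) * Real.log k := by positivity
        have hlogu : Real.exp 1 * Real.log (Real.log k) ≤ Real.log k := by
          have h := Real.log_le_sub_one_of_pos (show 0 < Real.log (k:ℝ) / Real.exp 1 by positivity)
          rw [Real.log_div (by linarith) (ne_of_gt (Real.exp_pos 1)), Real.log_exp] at h
          have h2 : Real.exp 1 * (Real.log (k:ℝ) / Real.exp 1) = Real.log (k:ℝ) :=
            mul_div_cancel₀ _ (ne_of_gt (Real.exp_pos 1))
          nlinarith [Real.exp_pos 1, mul_le_mul_of_nonneg_left h (le_of_lt (Real.exp_pos 1))]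
        have he := Real.exp_one_gt_d9
        have h1 : (k:ℝ) * Real.log ((k:ℝ) * Real.log k) ≤ 1.3841 * ((k:ℝ) * Real.log k) := by
          rw [Real.log_mul (ne_of_gt hkpos) (by linarith)]
          have hloglogpos : 0 < Real.log (Real.log (k:ℝ)) := Real.log_pos hu1
          nlinarith
        have h2 : (k:ℝ) ≤ 1.3841 * ((k:ℝ) * Real.log k) := by nlinarith
        exact final_step hLpos (le_trans hsum hPx_any) h1 h2
      · interval_cases k
        · have hPx : Real.log ((210 : ℕ) : ℝ) ≤ x := by rw [← prodP4]; exact hPx_any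
          exact_mod_cast case_small 4 x (534707/100000) 210 38571 5000 6047 2500
            (by norm_num) (by norm_num) (by norm_num) (by norm_num) (by exact_mod_cast (show (2:ℕ)^38571 ≤ 210^5000 by decide +kernel)) (by rw [div_pow, div_le_iff₀ (by positivity)]; exact_mod_cast (show (534707:ℕ)^2500 ≤ 2^6047 * 100000^2500 by decide +kernel))
            (by norm_num) (by norm_num) (by norm_num) hPx
        · have hPx : Real.log ((2310 : ℕ) : ℝ) ≤ x := by rw [← prodP5]; exact hPx_any
          exact_mod_cast case_small 5 x (387247/50000) 2310 13967 1250 29533 10000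
            (by norm_num) (by norm_num) (by norm_num) (by norm_num) (by exact_mod_cast (show (2:ℕ)^13967 ≤ 2310^1250 by decide +kernel)) (by rw [div_pow, div_le_iff₀ (by positivity)]; exact_mod_cast (show (387247:ℕ)^10000 ≤ 2^29533 * 50000^10000 by decide +kernel))
            (by norm_num) (by norm_num) (by norm_num) hPx
        · have hPx : Real.log ((30030 : ℕ) : ℝ) ≤ x := by rw [← prodP6]; exact hPx_any
          exact_mod_cast case_small 6 x (515497/50000) 30030 148741 10000 1683 500
            (by norm_num) (by norm_num) (by norm_num) (by norm_num) (by exact_mod_cast (show (2:ℕ)^148741 ≤ 30030^10000 by decide +kernel)) (by rw [div_pow, div_le_iff₀ (by positivity)]; exact_mod_cast (show (515497:ℕ)^500 ≤ 2^1683 * 50000^500 by decide +kernel))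
            (by norm_num) (by norm_num) (by norm_num) hPx
        · have hPx : Real.log ((510510 : ℕ) : ℝ) ≤ x := by rw [← prodP7]; exact hPx_any
          exact_mod_cast case_small 7 x (1314311/100000) 510510 37923 2000 37163 10000
            (by norm_num) (by norm_num) (by norm_num) (by norm_num) (by exact_mod_cast (show (2:ℕ)^37923 ≤ 510510^2000 by decide +kernel)) (by rw [div_pow, div_le_iff₀ (by positivity)]; exact_mod_cast (show (1314311:ℕ)^10000 ≤ 2^37163 * 100000^10000 by decide +kernel))
            (by norm_num) (by norm_num) (by norm_num) hPx
        · have hPx : Real.log ((9699690 : ℕ) : ℝ) ≤ x := by rw [← prodP8]; exact hPx_any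
          exact_mod_cast case_small 8 x (1608759/100000) 9699690 46419 2000 40079 10000
            (by norm_num) (by norm_num) (by norm_num) (by norm_num) (by exact_mod_cast (show (2:ℕ)^46419 ≤ 9699690^2000 by decide +kernel)) (by rw [div_pow, div_le_iff₀ (by positivity)]; exact_mod_cast (show (1608759:ℕ)^10000 ≤ 2^40079 * 100000^10000 by decide +kernel))
            (by norm_num) (by norm_num) (by norm_num) hPx
        · have hPx : Real.log ((223092870 : ℕ) : ℝ) ≤ x := by rw [← prodP9]; exact hPx_any
          exact_mod_cast case_small 9 x (384461/20000) 223092870 27733 1000 5331 1250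
            (by norm_num) (by norm_num) (by norm_num) (by norm_num) (by exact_mod_cast (show (2:ℕ)^27733 ≤ 223092870^1000 by decide +kernel)) (by rw [div_pow, div_le_iff₀ (by positivity)]; exact_mod_cast (show (384461:ℕ)^1250 ≤ 2^5331 * 20000^1250 by decide +kernel))
            (by norm_num) (by norm_num) (by norm_num) hPx
        · have hPx : Real.log ((6469693230 : ℕ) : ℝ) ≤ x := by rw [← prodP10]; exact hPx_any
          exact_mod_cast case_small 10 x (451807/20000) 6469693230 32591 1000 44977 10000
            (by norm_num) (by norm_num) (by norm_num) (by norm_num) (by exact_mod_cast (show (2:ℕ)^32591 ≤ 6469693230^1000 by decide +kernel)) (by rw [div_pow, div_le_iff₀ (by positivity)]; exact_mod_cast (show (451807:ℕ)^10000 ≤ 2^44977 * 20000^10000 by decide +kernel))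
            (by norm_num) (by norm_num) (by norm_num) hPx
        · have hPx : Real.log ((200560490130 : ℕ) : ℝ) ≤ x := by rw [← prodP11]; exact hPx_any
          exact_mod_cast case_small 11 x (1301217/50000) 200560490130 93863 2500 23509 5000
            (by norm_num) (by norm_num) (by norm_num) (by norm_num) (by exact_mod_cast (show (2:ℕ)^93863 ≤ 200560490130^2500 by decide +kernel)) (by rw [div_pow, div_le_iff₀ (by positivity)]; exact_mod_cast (show (1301217:ℕ)^5000 ≤ 2^23509 * 50000^5000 by decide +kernel))
            (by norm_num) (by norm_num) (by norm_num) hPx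
        · have hPx : Real.log ((7420738134810 : ℕ) : ℝ) ≤ x := by rw [← prodP12]; exact hPx_any
          exact_mod_cast case_small 12 x (2963523/100000) 7420738134810 213773 5000 48893 10000
            (by norm_num) (by norm_num) (by norm_num) (by norm_num) (by exact_mod_cast (show (2:ℕ)^213773 ≤ 7420738134810^5000 by decide +kernel)) (by rw [div_pow, div_le_iff₀ (by positivity)]; exact_mod_cast (show (2963523:ℕ)^10000 ≤ 2^48893 * 100000^10000 by decide +kernel))
            (by norm_num) (by norm_num) (by norm_num) hPx
        · have hPx : Real.log ((304250263527210 : ℕ) : ℝ) ≤ x := by rw [← prodP13]; exact hPx_any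
          exact_mod_cast case_small 13 x (3334883/100000) 304250263527210 240561 5000 12649 2500
            (by norm_num) (by norm_num) (by norm_num) (by norm_num) (by exact_mod_cast (show (2:ℕ)^240561 ≤ 304250263527210^5000 by decide +kernel)) (by rw [div_pow, div_le_iff₀ (by positivity)]; exact_mod_cast (show (3334883:ℕ)^2500 ≤ 2^12649 * 100000^2500 by decide +kernel))
            (by norm_num) (by norm_num) (by norm_num) hPx
        · have hPx : Real.log ((13082761331670030 : ℕ) : ℝ) ≤ x := by rw [← prodP14]; exact hPx_any
          exact_mod_cast case_small 14 x (1855503/50000) 13082761331670030 107077 2000 26069 5000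
            (by norm_num) (by norm_num) (by norm_num) (by norm_num) (by exact_mod_cast (show (2:ℕ)^107077 ≤ 13082761331670030^2000 by decide +kernel)) (by rw [div_pow, div_le_iff₀ (by positivity)]; exact_mod_cast (show (1855503:ℕ)^5000 ≤ 2^26069 * 50000^5000 by decide +kernel))
            (by norm_num) (by norm_num) (by norm_num) hPx
        · have hPx : Real.log ((614889782588491410 : ℕ) : ℝ) ≤ x := by rw [← prodP15]; exact hPx_any
          exact_mod_cast case_small 15 x (4096021/100000) 614889782588491410 590931 10000 26781 5000
            (by norm_num) (by norm_num) (by norm_num) (by norm_num) (by exact_mod_cast (show (2:ℕ)^590931 ≤ 614889782588491410^10000 by decide +kernel)) (by rw [div_pow, div_le_iff₀ (by positivity)]; exact_mod_cast (show (4096021:ℕ)^5000 ≤ 2^26781 * 100000^5000 by decide +kernel))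
            (by norm_num) (by norm_num) (by norm_num) hPx
        · have hPx : Real.log ((32589158477190044730 : ℕ) : ℝ) ≤ x := by rw [← prodP16]; exact hPx_any
          exact_mod_cast case_small 16 x (4493049/100000) 32589158477190044730 64821 1000 54897 10000
            (by norm_num) (by norm_num) (by norm_num) (by norm_num) (by exact_mod_cast (show (2:ℕ)^64821 ≤ 32589158477190044730^1000 by decide +kernel)) (by rw [div_pow, div_le_iff₀ (by positivity)]; exact_mod_cast (show (4493049:ℕ)^10000 ≤ 2^54897 * 100000^10000 by decide +kernel))
            (by norm_num) (by norm_num) (by norm_num) hPx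
  rw [le_div_iff₀ hlogx]
  linarith
end

section
/- For every integer k ≥ 1, the sum over a in {1,...,k} with gcd(a,k)=1 of gcd(a−1, k) equals φ(k)·d(k), where φ is Euler's totient function and d(k) is the number of divisors of k. -/
-- Key lemma: for d ∣ k, 2 ≤ k,
-- φ(d) * #{a ∈ range k : gcd a k = 1 ∧ d ∣ a-1} = φ(k)
lemma lemA (k d : ℕ) (hk : 2 ≤ k) (hd : d ∣ k) :
    Nat.totient d *
      ((Finset.range k).filter (fun a => Nat.gcd a k = 1 ∧ d ∣ a - 1)).card =
      Nat.totient k := by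
  have hk0 : k ≠ 0 := by omega
  haveI : NeZero k := ⟨hk0⟩
  have hd0 : d ≠ 0 := by rintro rfl; exact hk0 (Nat.eq_zero_of_zero_dvd hd)
  haveI : NeZero d := ⟨hd0⟩
  set f := ZMod.unitsMap hd with hf
  have hsurj : Function.Surjective f := ZMod.unitsMap_surjective hd
  -- the filtered set is in bijection with the kernel of f
  set S := (Finset.range k).filter (fun a => Nat.gcd a k = 1 ∧ d ∣ a - 1) with hS
  have e : S ≃ f.ker := by
    refine
      { toFun := fun a => ⟨ZMod.unitOfCoprime a.1 (by
          have := (Finset.mem_filter.mp a.2).2.1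
          exact this), ?_⟩
        invFun := fun u => ⟨(u.1 : ZMod k).val, ?_⟩
        left_inv := ?_, right_inv := ?_ }
    · -- membership in kernel
      have ha := Finset.mem_filter.mp a.2
      have ha1 : 1 ≤ a.1 := by
        rcases Nat.eq_zero_or_pos a.1 with h | h
        · exfalso
          have := ha.2.1
          rw [h, Nat.gcd_zero_left] at this
          omega
        · exact h
      rw [MonoidHom.mem_ker, Units.ext_iff, hf, ZMod.unitsMap_def]
      simp only [Units.coe_map, MonoidHom.coe_coe, ZMod.coe_unitOfCoprime, Units.val_one]
      rw [map_natCast]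
      have h2 : (a.1 : ℕ) = (a.1 - 1) + 1 := by omega
      rw [h2]
      push_cast
      rw [(ZMod.natCast_eq_zero_iff _ _).mpr ha.2.2, zero_add]
    · -- membership of val in S
      have hcop : Nat.Coprime (u.1 : ZMod k).val k := ZMod.val_coe_unit_coprime u.1
      have hval1 : 1 ≤ (u.1 : ZMod k).val := by
        rcases Nat.eq_zero_or_pos (u.1 : ZMod k).val with h | h
        · exfalso
          rw [h] at hcop
          have : k = 1 := by simpa [Nat.Coprime, Nat.gcd_zero_left] using hcop
          omega
        · exact h
      refine Finset.mem_filter.mpr ⟨Finset.mem_range.mpr (ZMod.val_lt _), hcop, ?_⟩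
      have hker := u.2
      rw [MonoidHom.mem_ker, Units.ext_iff] at hker
      have hker2 : (ZMod.castHom hd (ZMod d)) ((u.1 : ZMod k)) = 1 := hker
      have hu1 : (((u.1 : ZMod k).val : ℕ) : ZMod k) = (u.1 : ZMod k) :=
        ZMod.natCast_rightInverse _
      rw [← hu1, map_natCast] at hker2
      have : ((u.1 : ZMod k).val : ZMod d) = ((1 : ℕ) : ZMod d) := by
        rw [hker2]; norm_num
      have hmod := (ZMod.natCast_eq_natCast_iff _ _ _).mp this
      exact (Nat.modEq_iff_dvd' hval1).mp hmod.symm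
    · intro a
      apply Subtype.ext
      dsimp only
      rw [ZMod.coe_unitOfCoprime]
      exact ZMod.val_cast_of_lt (Finset.mem_range.mp (Finset.mem_filter.mp a.2).1)
    · intro u
      apply Subtype.ext
      apply Units.ext
      dsimp only
      rw [ZMod.coe_unitOfCoprime]
      exact ZMod.natCast_rightInverse _
  have hcard : S.card = Nat.card f.ker := by
    rw [Nat.card_eq_fintype_card, ← Fintype.card_coe]
    exact Fintype.card_congr e
  have h1 : Nat.card (ZMod k)ˣ = Nat.card (ZMod d)ˣ * Nat.card f.ker := by
    have := Subgroup.card_eq_card_quotient_mul_card_subgroup f.ker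
    rw [this]
    congr 1
    exact Nat.card_congr (QuotientGroup.quotientKerEquivOfSurjective f hsurj).symm.toEquiv.symm
  rw [hcard]
  have h2 : Nat.card (ZMod k)ˣ = Nat.totient k := by
    rw [Nat.card_eq_fintype_card, ZMod.card_units_eq_totient]
  have h3 : Nat.card (ZMod d)ˣ = Nat.totient d := by
    rw [Nat.card_eq_fintype_card, ZMod.card_units_eq_totient]
  rw [← h2, h1, h3]

theorem stmt_7 (k : ℕ) (hk : 1 ≤ k) :
    ∑ a ∈ (Finset.Icc 1 k).filter (fun a => Nat.gcd a k = 1), Nat.gcd (a - 1) k =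
      Nat.totient k * k.divisors.card := by
  rcases eq_or_lt_of_le hk with rfl | hk2
  · decide
  have hk0 : k ≠ 0 := by omega
  have hset : (Finset.Icc 1 k).filter (fun a => Nat.gcd a k = 1) =
      (Finset.range k).filter (fun a => Nat.gcd a k = 1) := by
    ext a
    simp only [Finset.mem_filter, Finset.mem_Icc, Finset.mem_range]
    constructor
    · rintro ⟨⟨h1, h2⟩, h3⟩
      refine ⟨?_, h3⟩
      rcases eq_or_lt_of_le h2 with rfl | h
      · rw [Nat.gcd_self] at h3; omega
      · exact h
    · rintro ⟨h1, h3⟩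
      refine ⟨⟨?_, by omega⟩, h3⟩
      rcases Nat.eq_zero_or_pos a with rfl | h
      · rw [Nat.gcd_zero_left] at h3; omega
      · exact h
  have hgcd : ∀ a : ℕ, Nat.gcd (a - 1) k =
      ∑ d ∈ k.divisors.filter (fun d => d ∣ a - 1), Nat.totient d := by
    intro a
    conv_lhs => rw [← Nat.sum_totient (Nat.gcd (a - 1) k)]
    congr 1
    ext e
    simp only [Nat.mem_divisors, Finset.mem_filter]
    constructor
    · rintro ⟨he, hne⟩
      exact ⟨⟨he.trans (Nat.gcd_dvd_right _ _), hk0⟩, he.trans (Nat.gcd_dvd_left _ _)⟩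
    · rintro ⟨⟨hek, _⟩, hea⟩
      exact ⟨Nat.dvd_gcd hea hek,
        fun h => hk0 (Nat.eq_zero_of_gcd_eq_zero_right h)⟩
  rw [hset]
  set S := (Finset.range k).filter (fun a => Nat.gcd a k = 1) with hSdef
  calc ∑ a ∈ S, Nat.gcd (a - 1) k
      = ∑ a ∈ S, ∑ d ∈ k.divisors, if d ∣ a - 1 then Nat.totient d else 0 := by
        refine Finset.sum_congr rfl fun a _ => ?_
        rw [hgcd a, Finset.sum_filter]
    _ = ∑ d ∈ k.divisors, ∑ a ∈ S, if d ∣ a - 1 then Nat.totient d else 0 :=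
        Finset.sum_comm
    _ = ∑ d ∈ k.divisors, Nat.totient d * (S.filter (fun a => d ∣ a - 1)).card := by
        refine Finset.sum_congr rfl fun d _ => ?_
        rw [← Finset.sum_filter, Finset.sum_const, smul_eq_mul, mul_comm]
    _ = ∑ d ∈ k.divisors, Nat.totient k := by
        refine Finset.sum_congr rfl fun d hd => ?_
        rw [hSdef, Finset.filter_filter]
        exact lemA k d (by omega) (Nat.mem_divisors.mp hd).1
    _ = Nat.totient k * k.divisors.card := by
        rw [Finset.sum_const, smul_eq_mul, mul_comm]
end

section
/- Fix k ≥ 2. Let M be a positive integer divisible by every prime q with (q−1) | k, such that M − 1 is not prime, and let N = M^k. Then for every prime p < M, the number N − p^k has at least d(k) prime factors counted with multiplicity, where d(k) is the number of divisors of k. -/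
open Polynomial Finset

noncomputable def gfac (a b : ℤ) (d : ℕ) : ℤ := ((cyclotomic d ℤ).scaleRoots b).eval a

lemma gfac_real (a b : ℤ) (hb : b ≠ 0) (d : ℕ) :
    (gfac a b d : ℝ) = (b : ℝ) ^ d.totient * (cyclotomic d ℝ).eval ((a : ℝ) / (b : ℝ)) := by
  have hb' : (b : ℝ) ≠ 0 := Int.cast_ne_zero.mpr hb
  have h := scaleRoots_eval₂_mul (p := cyclotomic d ℤ) (Int.castRingHom ℝ)
      ((a : ℝ) / (b : ℝ)) b
  rw [show (Int.castRingHom ℝ) b * ((a : ℝ) / (b : ℝ)) = (Int.castRingHom ℝ) a by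
        simp only [eq_intCast]; field_simp,
      eval₂_at_apply, eval₂_eq_eval_map, map_cyclotomic, natDegree_cyclotomic] at h
  simpa [gfac] using h

lemma gfac_prod (a b : ℤ) (hb : b ≠ 0) {n : ℕ} (hn : 0 < n) :
    ∏ d ∈ n.divisors, gfac a b d = a ^ n - b ^ n := by
  have hb' : (b : ℝ) ≠ 0 := Int.cast_ne_zero.mpr hb
  have key : ((∏ d ∈ n.divisors, gfac a b d : ℤ) : ℝ) = ((a ^ n - b ^ n : ℤ) : ℝ) := by
    push_cast
    rw [Finset.prod_congr rfl (fun d _ => gfac_real a b hb d), Finset.prod_mul_distrib,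
      Finset.prod_pow_eq_pow_sum, Nat.sum_totient, ← eval_prod,
      prod_cyclotomic_eq_X_pow_sub_one hn ℝ]
    simp only [eval_sub, eval_pow, eval_X, eval_one]
    field_simp
    rw [div_pow, mul_sub, mul_one, mul_div_assoc', mul_div_cancel_left₀ _ (pow_ne_zero _ hb')]
  exact_mod_cast key

lemma gfac_two_le (a b : ℤ) (hb : 1 ≤ b) (hab : b + 2 ≤ a) {d : ℕ} (hd : 0 < d) :
    2 ≤ gfac a b d := by
  have hb0 : (0 : ℝ) < (b : ℝ) := by exact_mod_cast hb.trans_lt' zero_lt_one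
  have hab' : (b : ℝ) + 2 ≤ (a : ℝ) := by exact_mod_cast hab
  rcases eq_or_lt_of_le (Nat.succ_le_of_lt hd) with rfl | h2
  · -- d = 1
    have : (gfac a b 1 : ℝ) = (a : ℝ) - (b : ℝ) := by
      rw [gfac_real a b (by omega) 1, cyclotomic_one]
      simp [Nat.totient_one]
      field_simp
    have h2le : (2 : ℝ) ≤ (gfac a b 1 : ℝ) := by rw [this]; linarith
    exact_mod_cast h2le
  · -- d ≥ 2
    have hd2 : 2 ≤ d := h2
    have hq : 1 < (a : ℝ) / (b : ℝ) := (one_lt_div hb0).mpr (by linarith)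
    have hcyc := sub_one_pow_totient_lt_cyclotomic_eval (q := (a : ℝ) / (b : ℝ)) hd2 hq
    have htpos : 0 < d.totient := Nat.totient_pos.mpr hd
    have hbpow : (0 : ℝ) < (b : ℝ) ^ d.totient := pow_pos hb0 _
    have key : (b : ℝ) ^ d.totient * ((a : ℝ) / (b : ℝ) - 1) ^ d.totient
        < (gfac a b d : ℝ) := by
      rw [gfac_real a b (by omega) d]
      exact (mul_lt_mul_iff_right₀ hbpow).mpr hcyc
    have heq : (b : ℝ) ^ d.totient * ((a : ℝ) / (b : ℝ) - 1) ^ d.totient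
        = ((a : ℝ) - (b : ℝ)) ^ d.totient := by
      rw [← mul_pow]; congr 1; field_simp
    have h2ab : (2 : ℝ) ≤ (a : ℝ) - (b : ℝ) := by linarith
    have h2pow : (2 : ℝ) ≤ ((a : ℝ) - (b : ℝ)) ^ d.totient := by
      calc (2 : ℝ) = 2 ^ 1 := (pow_one 2).symm
        _ ≤ 2 ^ d.totient := pow_le_pow_right₀ one_le_two htpos
        _ ≤ ((a : ℝ) - (b : ℝ)) ^ d.totient := pow_le_pow_left₀ (by norm_num) h2ab _
    have : (2 : ℝ) < (gfac a b d : ℝ) := by rw [heq] at key; linarith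
    exact_mod_cast this.le

lemma omega_prod_le (s : Finset ℕ) (f : ℕ → ℕ) (hf : ∀ d ∈ s, 2 ≤ f d) :
    s.card ≤ (∏ d ∈ s, f d).primeFactorsList.length := by
  induction s using Finset.induction_on with
  | empty => simp
  | insert x s hx ih =>
    rw [Finset.prod_insert hx]
    have hfx : f x ≠ 0 := by have := hf x (Finset.mem_insert_self x s); omega
    have hprod : (∏ d ∈ s, f d) ≠ 0 := by
      apply Finset.prod_ne_zero_iff.mpr
      intro d hd; have := hf d (Finset.mem_insert_of_mem hd); omega
    have hperm := Nat.perm_primeFactorsList_mul hfx hprod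
    rw [Finset.card_insert_of_notMem hx, hperm.length_eq, List.length_append]
    have h1 : 1 ≤ (f x).primeFactorsList.length := by
      rcases Nat.exists_prime_and_dvd (show f x ≠ 1 by
        have := hf x (Finset.mem_insert_self x s); omega) with ⟨q, hq, hqd⟩
      have : q ∈ (f x).primeFactorsList :=
        (Nat.mem_primeFactorsList hfx).mpr ⟨hq, hqd⟩
      exact List.length_pos_iff.mpr (List.ne_nil_of_mem this)
    have h2 := ih (fun d hd => hf d (Finset.mem_insert_of_mem hd))
    omega

theorem stmt_9 (k M : ℕ) (hk : 2 ≤ k) (hMpos : 0 < M)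
    (hM : ∀ q : ℕ, q.Prime → (q - 1) ∣ k → q ∣ M) (hM1 : ¬ Nat.Prime (M - 1)) :
    ∀ p : ℕ, p.Prime → p < M →
      k.divisors.card ≤ (M ^ k - p ^ k).primeFactorsList.length := by
  intro p hp hpM
  have hpM1 : p ≠ M - 1 := fun h => hM1 (h ▸ hp)
  have hp2 : 2 ≤ p := hp.two_le
  have hpM2 : p + 2 ≤ M := by omega
  have hb : (1 : ℤ) ≤ (p : ℤ) := by exact_mod_cast (by omega : 1 ≤ p)
  have hab : (p : ℤ) + 2 ≤ (M : ℤ) := by exact_mod_cast hpM2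
  have hkpos : 0 < k := by omega
  have hprod := gfac_prod (M : ℤ) (p : ℤ) (by exact_mod_cast (by omega : p ≠ 0) : (p:ℤ) ≠ 0) hkpos
  have hf : ∀ d ∈ k.divisors, 2 ≤ gfac (M : ℤ) (p : ℤ) d := fun d hd =>
    gfac_two_le (M : ℤ) (p : ℤ) hb hab (Nat.pos_of_mem_divisors hd)
  -- natural number version of the factors
  have hcast : (M ^ k - p ^ k : ℕ) = ∏ d ∈ k.divisors, (gfac (M : ℤ) (p : ℤ) d).toNat := by
    have hle : p ^ k ≤ M ^ k := Nat.pow_le_pow_left (by omega) k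
    have : ((M ^ k - p ^ k : ℕ) : ℤ) = ((∏ d ∈ k.divisors, (gfac (M : ℤ) (p : ℤ) d).toNat : ℕ) : ℤ) := by
      push_cast [hle]
      rw [Finset.prod_congr rfl (fun d hd => Int.toNat_of_nonneg (by linarith [hf d hd]))]
      rw [hprod]
    exact_mod_cast this
  rw [hcast]
  exact omega_prod_le _ _ (fun d hd => by
    have := hf d hd
    omega)
end

section
/- Fix k ≥ 2. There exist infinitely many positive integers N with N ≢ 1 (mod q) for every prime q with (q−1) | k, such that for all primes p < N^(1/k), the integer N − p^k has at least d(k) prime factors counted with multiplicity. -/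
open Polynomial Finset

private lemma omega_prod : ∀ (s : Finset ℕ) (f : ℕ → ℕ), (∀ d ∈ s, 2 ≤ f d) →
    s.card ≤ (∏ d ∈ s, f d).primeFactorsList.length := by
  intro s
  induction s using Finset.induction_on with
  | empty => simp
  | @insert a s ha ih =>
    intro f h
    rw [Finset.prod_insert ha, Finset.card_insert_of_notMem ha]
    have h1 : f a ≠ 0 := by have := h a (Finset.mem_insert_self a s); omega
    have h2 : (∏ d ∈ s, f d) ≠ 0 := Finset.prod_ne_zero_iff.mpr
      (fun d hd => by have := h d (Finset.mem_insert_of_mem hd); omega)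
    have hperm := (Nat.perm_primeFactorsList_mul h1 h2).length_eq
    rw [hperm, List.length_append]
    have hfa : 1 ≤ (f a).primeFactorsList.length := by
      rcases List.eq_nil_or_concat (f a).primeFactorsList with hn | _
      · rw [Nat.primeFactorsList_eq_nil] at hn
        have := h a (Finset.mem_insert_self a s); omega
      · rcases ‹∃ _, _› with ⟨l, b, hb⟩
        simp [hb]
    have := ih f (fun d hd => h d (Finset.mem_insert_of_mem hd))
    omega

private lemma key_cast (c p d : ℕ) (hp : 0 < p) :
    ((((cyclotomic d ℤ).scaleRoots (p:ℤ)).eval (c:ℤ) : ℤ) : ℝ)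
      = (p:ℝ) ^ d.totient * (cyclotomic d ℝ).eval ((c:ℝ)/p) := by
  have hp0 : (p:ℝ) ≠ 0 := by positivity
  have hmap : (((cyclotomic d ℤ).scaleRoots (p:ℤ)).map (Int.castRingHom ℝ))
      = (cyclotomic d ℝ).scaleRoots (p:ℝ) := by
    rw [map_scaleRoots _ _ _ (by simp [(cyclotomic.monic d ℤ).leadingCoeff])]
    rw [map_cyclotomic]
    norm_num
  have h1 : ((((cyclotomic d ℤ).scaleRoots (p:ℤ)).eval (c:ℤ) : ℤ) : ℝ)
      = ((cyclotomic d ℝ).scaleRoots (p:ℝ)).eval ((c:ℕ):ℝ) := by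
    have := eval_intCast_map (Int.castRingHom ℝ) ((cyclotomic d ℤ).scaleRoots (p:ℤ)) (c:ℤ)
    rw [hmap] at this
    simpa using this.symm
  rw [h1]
  have h2 := scaleRoots_eval₂_mul (p := cyclotomic d ℝ) (RingHom.id ℝ) ((c:ℝ)/p) (p:ℝ)
  simp only [RingHom.id_apply] at h2
  have h3 : (p:ℝ) * ((c:ℝ)/p) = (c:ℝ) := by field_simp
  rw [h3] at h2
  have h4 : ∀ (q : ℝ[X]) (y : ℝ), eval₂ (RingHom.id ℝ) y q = q.eval y := fun q y => rfl
  rw [h4, h4] at h2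
  rw [h2, natDegree_cyclotomic]

private lemma key (k c p : ℕ) (hk : 2 ≤ k) (hp : 0 < p) (hpc : p + 2 ≤ c) :
    k.divisors.card ≤ (c ^ k - p ^ k).primeFactorsList.length := by
  have hk0 : 0 < k := by omega
  have hp0 : (0:ℝ) < p := by exact_mod_cast hp
  have hcp : (p:ℝ) + 2 ≤ c := by exact_mod_cast hpc
  set x : ℝ := (c:ℝ)/p with hx
  have hx1 : 1 < x := by rw [hx, lt_div_iff₀ hp0]; linarith
  set G : ℕ → ℤ := fun d => (((cyclotomic d ℤ).scaleRoots (p:ℤ)).eval (c:ℤ)) with hG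
  -- lower bound on each factor
  have hlow : ∀ d ∈ k.divisors, 2 ≤ G d := by
    intro d hd
    have hd1 : 1 ≤ d := (Nat.one_le_iff_ne_zero).mpr (Nat.pos_of_mem_divisors hd).ne'
    have hcast := key_cast c p d hp
    have h2 : (2:ℝ) ≤ ((G d : ℤ) : ℝ) := by
      rcases eq_or_lt_of_le hd1 with h1 | h2
    -- d = 1
      · rw [hG]
        simp only
        rw [hcast, ← h1]
        simp only [Nat.totient_one, pow_one, cyclotomic_one, eval_sub, eval_X, eval_one]
        have hpp : (p:ℝ) * ((c:ℝ)/p - 1) = (c:ℝ) - p := by field_simp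
        rw [hpp]; linarith
      · have hd2 : 2 ≤ d := h2
        have hb := sub_one_pow_totient_lt_cyclotomic_eval hd2 hx1
        have hφ : 1 ≤ d.totient := Nat.totient_pos.mpr (by omega)
        have hkey : ((p:ℝ) * (x - 1)) ^ d.totient ≤ (p:ℝ) ^ d.totient * (cyclotomic d ℝ).eval x := by
          rw [mul_pow]
          have : (0:ℝ) < (p:ℝ) ^ d.totient := by positivity
          nlinarith [pow_pos (show (0:ℝ) < x - 1 by linarith) d.totient]
        have hpx : (p:ℝ) * (x - 1) = (c:ℝ) - p := by rw [hx]; field_simp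
        rw [hG]; simp only; rw [hcast, ← hx]
        calc (2:ℝ) ≤ 2 ^ d.totient := le_self_pow₀ (by norm_num) (by omega)
          _ ≤ ((c:ℝ) - p) ^ d.totient := by
                apply pow_le_pow_left₀ (by norm_num) (by linarith)
          _ ≤ _ := by rw [← hpx]; exact hkey
    exact_mod_cast h2
  -- product identity
  have hprod : ((∏ d ∈ k.divisors, G d : ℤ) : ℝ) = (c:ℝ)^k - (p:ℝ)^k := by
    push_cast
    calc ∏ d ∈ k.divisors, ((G d : ℤ) : ℝ)
        = ∏ d ∈ k.divisors, (p:ℝ) ^ d.totient * (cyclotomic d ℝ).eval x := by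
          exact Finset.prod_congr rfl fun d _ => key_cast c p d hp
      _ = (p:ℝ) ^ (∑ d ∈ k.divisors, d.totient) * (∏ d ∈ k.divisors, cyclotomic d ℝ).eval x := by
          rw [Finset.prod_mul_distrib, Finset.prod_pow_eq_pow_sum, eval_prod]
      _ = (p:ℝ) ^ k * (x ^ k - 1) := by
          rw [Nat.sum_totient, prod_cyclotomic_eq_X_pow_sub_one hk0]
          simp
      _ = (c:ℝ)^k - (p:ℝ)^k := by
          rw [hx, div_pow, mul_sub, mul_div_cancel₀ _ (pow_ne_zero k hp0.ne'), mul_one]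
  -- transfer to ℕ
  have hint : (∏ d ∈ k.divisors, G d : ℤ) = (c:ℤ)^k - (p:ℤ)^k := by
    have : (((c:ℤ)^k - (p:ℤ)^k : ℤ) : ℝ) = (c:ℝ)^k - (p:ℝ)^k := by push_cast; ring
    exact_mod_cast hprod.trans this.symm
  have hpk : p ^ k ≤ c ^ k := Nat.pow_le_pow_left (by omega) k
  have hnat : (c ^ k - p ^ k : ℕ) = ∏ d ∈ k.divisors, (G d).toNat := by
    have h1 : ∀ d ∈ k.divisors, ((G d).toNat : ℤ) = G d := fun d hd =>
      Int.toNat_of_nonneg (by linarith [hlow d hd])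
    have : ((∏ d ∈ k.divisors, (G d).toNat : ℕ) : ℤ) = ((c ^ k - p ^ k : ℕ) : ℤ) := by
      push_cast [Nat.cast_sub hpk]
      rw [Finset.prod_congr rfl h1, hint]
    exact_mod_cast this.symm
  rw [hnat]
  exact omega_prod _ _ (fun d hd => by have := hlow d hd; omega)

theorem stmt_10 (k : ℕ) (hk : 2 ≤ k) :
    {N : ℕ | 0 < N ∧ (∀ q : ℕ, q.Prime → (q - 1) ∣ k → ¬ N ≡ 1 [MOD q]) ∧
      ∀ p : ℕ, p.Prime → (p : ℝ) < (N : ℝ) ^ ((1 : ℝ) / k) →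
        k.divisors.card ≤ (N - p ^ k).primeFactorsList.length}.Infinite := by
  set P : ℕ := (k+1).factorial with hP
  have hP2 : 2 ≤ P := by
    calc 2 ≤ k + 1 := by omega
    _ ≤ (k+1).factorial := Nat.self_le_factorial _
  obtain ⟨s, hsP, hs⟩ := Nat.exists_infinite_primes (P + 1)
  have hco : Nat.Coprime P (s ^ 2) := by
    apply Nat.Coprime.pow_right
    rw [Nat.coprime_comm]
    apply hs.coprime_iff_not_dvd.mpr
    intro hdvd
    exact absurd (Nat.le_of_dvd (by omega) hdvd) (by omega)
  obtain ⟨c0, hc0P, hc0s⟩ := Nat.chineseRemainder hco 0 1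
  set M : ℕ := P * s ^ 2 with hM
  have hM0 : 0 < M := by
    have := hs.two_le
    have : 0 < s ^ 2 := by positivity
    positivity
  -- main per-element lemma
  have hmem : ∀ m : ℕ, (c0 + (m+1) * M) ^ k ∈
      {N : ℕ | 0 < N ∧ (∀ q : ℕ, q.Prime → (q - 1) ∣ k → ¬ N ≡ 1 [MOD q]) ∧
      ∀ p : ℕ, p.Prime → (p : ℝ) < (N : ℝ) ^ ((1 : ℝ) / k) →
        k.divisors.card ≤ (N - p ^ k).primeFactorsList.length} := by
    intro m
    set c : ℕ := c0 + (m+1) * M with hc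
    have hPc : P ∣ c := by
      have h1 : P ∣ c0 := (Nat.modEq_zero_iff_dvd).mp hc0P
      exact Dvd.dvd.add h1 ⟨(m+1) * s ^ 2, by ring⟩
    have hc2 : 2 ≤ c := le_trans hP2 (Nat.le_of_dvd (by positivity) hPc)
    have hcs : c ≡ 1 [MOD s ^ 2] := by
      have h1 : s ^ 2 ∣ c - c0 := by
        have h2 : c - c0 = (m+1) * M := by omega
        rw [h2, hM]
        exact ⟨(m+1) * P, by ring⟩
      exact (((Nat.modEq_iff_dvd' (by omega)).mpr h1)).symm.trans hc0s
    have hsc1 : s ^ 2 ∣ c - 1 := (Nat.modEq_iff_dvd' (by omega)).mp hcs.symm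
    -- c - 1 is not prime
    have hcomp : ¬ (c - 1).Prime := by
      intro hpr
      have hs1 : s ∣ c - 1 := dvd_trans (dvd_pow_self s (by norm_num)) hsc1
      rcases (Nat.Prime.eq_one_or_self_of_dvd hpr s hs1) with h | h
      · exact absurd h (by have := hs.two_le; omega)
      · have : s ^ 2 ∣ s := h ▸ hsc1
        have hle := Nat.le_of_dvd (by have := hs.two_le; omega) this
        have := hs.two_le
        nlinarith
    refine ⟨by positivity, ?_, ?_⟩
    · -- forbidden residues
      intro q hq hqk hmod
      have hqk1 : q ≤ k + 1 := by
        have h1 : q - 1 ≤ k := Nat.le_of_dvd (by omega) hqk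
        omega
      have hqP : q ∣ P := Nat.dvd_factorial hq.pos hqk1
      have hqc : q ∣ c ^ k := dvd_pow (hqP.trans hPc) (by omega)
      have h0 : c ^ k % q = 0 := Nat.eq_zero_of_dvd_of_lt hqc |> fun _ => Nat.mod_eq_zero_of_dvd hqc
      have h1 : (1 : ℕ) % q = 1 := Nat.mod_eq_of_lt hq.one_lt
      rw [Nat.ModEq, h0, h1] at hmod
      exact one_ne_zero hmod.symm
    · -- the key bound
      intro p hp hplt
      have hck : ((c ^ k : ℕ) : ℝ) ^ ((1:ℝ)/k) = (c : ℝ) := by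
        push_cast
        rw [← Real.rpow_natCast (c:ℝ) k, ← Real.rpow_mul (by positivity)]
        rw [mul_one_div, div_self (by positivity : (k:ℝ) ≠ 0), Real.rpow_one]
      rw [hck] at hplt
      have hpc : p < c := by exact_mod_cast hplt
      have hpc2 : p + 2 ≤ c := by
        rcases Nat.lt_or_ge p (c - 1) with h | h
        · omega
        · have : p = c - 1 := by omega
          exact absurd (this ▸ hp) hcomp
      exact key k c p hk hp.pos hpc2
  have hinj : Function.Injective (fun m : ℕ => (c0 + (m+1) * M) ^ k) := by
    intro a b hab
    simp only at hab
    have := Nat.pow_left_injective (by omega : k ≠ 0) hab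
    have hM1 : 1 ≤ M := hM0
    nlinarith [this]
  exact Set.infinite_of_injective_forall_mem hinj hmem
end

section
/- Let k ≥ 1, q a prime with (q−1) | k, and let n be the largest integer such that x^k ≡ 1 (mod q^n) holds for all x coprime to q. Then for each b with 0 ≤ b < q, the congruence x^k ≡ 1 + b·q^n (mod q^(n+1)) has exactly q^(n−1)(q−1) solutions x mod q^(n+1) with gcd(x,q)=1. -/
theorem stmt_14 (k q n : ℕ) (hk : 1 ≤ k) (hq : q.Prime) (hqk : (q - 1) ∣ k) (hn : 1 ≤ n)
    (hall : ∀ x : ℕ, Nat.Coprime x q → x ^ k ≡ 1 [MOD q ^ n])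
    (hmax : ¬ ∀ x : ℕ, Nat.Coprime x q → x ^ k ≡ 1 [MOD q ^ (n + 1)]) :
    ∀ b : ℕ, b < q →
      ((Finset.range (q ^ (n + 1))).filter
          (fun x => Nat.Coprime x q ∧ x ^ k ≡ 1 + b * q ^ n [MOD q ^ (n + 1)])).card =
        q ^ (n - 1) * (q - 1) := by
  intro b hb
  have hq1 : 1 < q := hq.one_lt
  have hN : NeZero (q ^ (n + 1)) := ⟨pow_ne_zero _ hq.ne_zero⟩
  have hM : NeZero (q ^ n) := ⟨pow_ne_zero _ hq.ne_zero⟩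
  set N := q ^ (n + 1) with hNdef
  set M := q ^ n with hMdef
  have hd : M ∣ N := pow_dvd_pow q (Nat.le_succ n)
  have hqM : q ∣ M := dvd_pow_self q (by omega)
  have hqN : q ∣ N := dvd_pow_self q (by omega)
  set f : (ZMod N)ˣ →* (ZMod N)ˣ := powMonoidHom k with hf
  set K : Subgroup (ZMod N)ˣ := (ZMod.unitsMap hd).ker with hK
  -- cardinalities
  have cardG : Nat.card (ZMod N)ˣ = q ^ n * (q - 1) := by
    rw [Nat.card_eq_fintype_card, ZMod.card_units_eq_totient,
      Nat.totient_prime_pow hq (Nat.succ_pos n)]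
    simp
  have cardM : Nat.card (ZMod M)ˣ = q ^ (n - 1) * (q - 1) := by
    rw [Nat.card_eq_fintype_card, ZMod.card_units_eq_totient,
      Nat.totient_prime_pow hq (by omega : 0 < n)]
  have hGsplit : q ^ n * (q - 1) = (q ^ (n - 1) * (q - 1)) * q := by
    rw [mul_right_comm, ← pow_succ]
    congr 2
    omega
  have hpos : 0 < q ^ (n - 1) * (q - 1) := by
    have : 0 < q - 1 := by omega
    positivity
  have cardK : Nat.card K = q := by
    have h1 := Subgroup.card_eq_card_quotient_mul_card_subgroup K
    have h2 : Nat.card ((ZMod N)ˣ ⧸ K) = Nat.card (ZMod M)ˣ :=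
      Nat.card_congr (QuotientGroup.quotientKerEquivOfSurjective _
        (ZMod.unitsMap_surjective hd)).toEquiv
    rw [h2, cardM, cardG] at h1
    exact Nat.eq_of_mul_eq_mul_left hpos (h1.symm.trans hGsplit)
  -- range f ≤ K
  have hrangeK : f.range ≤ K := by
    rintro _ ⟨u, rfl⟩
    have hx : Nat.Coprime (u : ZMod N).val q :=
      Nat.Coprime.coprime_dvd_right hqN (ZMod.val_coe_unit_coprime u)
    have hmod := hall _ hx
    have : ((((u : ZMod N).val : ℕ) ^ k : ℕ) : ZMod M) = ((1 : ℕ) : ZMod M) :=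
      (ZMod.natCast_eq_natCast_iff _ _ _).mpr hmod
    have key : ((ZMod.castHom hd (ZMod M)) ((u : ZMod N))) ^ k = 1 := by
      have h1 : (ZMod.castHom hd (ZMod M)) (u : ZMod N) = (((u : ZMod N).val : ℕ) : ZMod M) := by
        rw [ZMod.castHom_apply, ← ZMod.natCast_val]
      rw [h1, ← Nat.cast_pow, this, Nat.cast_one]
    rw [hK, MonoidHom.mem_ker]
    ext
    rw [ZMod.unitsMap_def]
    simpa [hf] using key
  -- range is nontrivial
  push_neg at hmax
  obtain ⟨x₀, hx₀q, hx₀⟩ := hmax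
  have hx₀N : Nat.Coprime x₀ N := hx₀q.pow_right _
  have hfne : f (ZMod.unitOfCoprime x₀ hx₀N) ≠ 1 := by
    intro h
    apply hx₀
    have : ((x₀ ^ k : ℕ) : ZMod N) = ((1 : ℕ) : ZMod N) := by
      have := congrArg (fun u : (ZMod N)ˣ => (u : ZMod N)) h
      simpa [hf, powMonoidHom_apply, ZMod.coe_unitOfCoprime] using this
    exact (ZMod.natCast_eq_natCast_iff _ _ _).mp this
  -- range f = K
  have hrange : f.range = K := by
    have hdvd : Nat.card f.range ∣ Nat.card K := Subgroup.card_dvd_of_le hrangeK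
    rw [cardK] at hdvd
    rcases (Nat.dvd_prime hq).mp hdvd with h1 | h1
    · exfalso
      apply hfne
      have : f (ZMod.unitOfCoprime x₀ hx₀N) ∈ f.range := ⟨_, rfl⟩
      rw [Subgroup.card_eq_one.mp h1] at this
      simpa using this
    · exact Subgroup.eq_of_le_of_card_ge hrangeK (by rw [cardK, h1])
  -- kernel cardinality
  have cardker : Nat.card f.ker = q ^ (n - 1) * (q - 1) := by
    have h1 := Subgroup.card_eq_card_quotient_mul_card_subgroup f.ker
    have h2 : Nat.card ((ZMod N)ˣ ⧸ f.ker) = Nat.card f.range :=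
      Nat.card_congr (QuotientGroup.quotientKerEquivRange f).toEquiv
    rw [h2, hrange, cardK, cardG] at h1
    have : q * Nat.card f.ker = q * (q ^ (n - 1) * (q - 1)) := by
      rw [← h1, hGsplit]; ring
    exact Nat.eq_of_mul_eq_mul_left (by omega) this
  -- the target unit
  have hcq : Nat.Coprime (1 + b * M) q := by
    obtain ⟨m, hm⟩ := hqM
    rw [hm, show 1 + b * (q * m) = 1 + (b * m) * q by ring]
    exact (Nat.coprime_add_mul_right_left 1 q (b * m)).mpr (Nat.coprime_one_left q)
  have hcN : Nat.Coprime (1 + b * M) N := hcq.pow_right _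
  set c : (ZMod N)ˣ := ZMod.unitOfCoprime _ hcN with hc
  have hcK : c ∈ K := by
    have key : (ZMod.castHom hd (ZMod M)) ((c : ZMod N)) = 1 := by
      rw [hc, ZMod.coe_unitOfCoprime, map_natCast]
      push_cast
      simp [ZMod.natCast_self]
    rw [hK, MonoidHom.mem_ker]
    ext
    rw [ZMod.unitsMap_def]
    simpa using key
  obtain ⟨v, hv⟩ : c ∈ f.range := hrange ▸ hcK
  -- fiber cardinality
  have fibcard : (Finset.univ.filter (fun u : (ZMod N)ˣ => u ^ k = c)).card
      = q ^ (n - 1) * (q - 1) := by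
    have hset : (f ⁻¹' {f v} : Set (ZMod N)ˣ)
        = ↑(Finset.univ.filter (fun u : (ZMod N)ˣ => u ^ k = c)) := by
      ext u
      simp [hf, powMonoidHom_apply, ← hv]
    have := Nat.card_congr (f.fiberEquivKer v)
    rw [hset, cardker] at this
    rw [← this, Nat.card_coe_set_eq, Set.ncard_coe_finset]
  -- transfer counting
  rw [← fibcard]
  apply Finset.card_bij (fun x hx => ZMod.unitOfCoprime x
    (((Finset.mem_filter.mp hx).2.1).pow_right _ : Nat.Coprime x N))
  · intro x hx
    obtain ⟨hxr, hxq, hxmod⟩ := Finset.mem_filter.mp hx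
    simp only [Finset.mem_filter, Finset.mem_univ, true_and]
    ext
    push_cast [ZMod.coe_unitOfCoprime, hc]
    exact_mod_cast (ZMod.natCast_eq_natCast_iff _ _ _).mpr hxmod
  · intro x hx y hy h
    have hx' := Finset.mem_range.mp (Finset.mem_filter.mp hx).1
    have hy' := Finset.mem_range.mp (Finset.mem_filter.mp hy).1
    have : ((x : ZMod N)) = ((y : ZMod N)) := by
      have := congrArg (fun u : (ZMod N)ˣ => (u : ZMod N)) h
      simpa [ZMod.coe_unitOfCoprime] using this
    calc x = (x : ZMod N).val := (ZMod.val_cast_of_lt hx').symm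
    _ = (y : ZMod N).val := by rw [this]
    _ = y := ZMod.val_cast_of_lt hy'
  · intro u hu
    have huk : u ^ k = c := (Finset.mem_filter.mp hu).2
    refine ⟨(u : ZMod N).val, Finset.mem_filter.mpr ⟨Finset.mem_range.mpr (ZMod.val_lt _),
      Nat.Coprime.coprime_dvd_right hqN (ZMod.val_coe_unit_coprime u), ?_⟩, ?_⟩
    · have : (((u : ZMod N).val ^ k : ℕ) : ZMod N) = ((1 + b * M : ℕ) : ZMod N) := by
        push_cast
        rw [ZMod.natCast_val, ZMod.cast_id]
        have := congrArg (fun w : (ZMod N)ˣ => (w : ZMod N)) huk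
        simpa [hc, ZMod.coe_unitOfCoprime] using this
      exact (ZMod.natCast_eq_natCast_iff _ _ _).mp this
    · ext
      simp [ZMod.coe_unitOfCoprime, ZMod.natCast_val, ZMod.cast_id]
end

section
/- For every ε > 0 and integer k ≥ 3, the number of solutions (a, b) in coprime positive integers to N = a^k + b^k is O_{k,ε}(N^ε) as N → ∞; more precisely there is a constant C(k) such that the number of coprime solutions is at most C(k)^(1 + ω(N)), where ω(N) is the number of distinct prime factors of N. -/
lemma count_class (n n₁ : ℕ) (hn : n ≠ 0) (hd : n₁ ∣ n) (P : ZMod n → Prop) :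
    Nat.card {z : ZMod n // P z ∧ z.val % n₁ = 1 % n₁} ≤ n / n₁ := by
  haveI : NeZero n := ⟨hn⟩
  have : Nat.card {z : ZMod n // P z ∧ z.val % n₁ = 1 % n₁} ≤ Nat.card (Fin (n / n₁)) := by
    apply Nat.card_le_card_of_injective
      (fun z => ⟨z.1.val / n₁, Nat.div_lt_div_of_lt_of_dvd hd z.1.val_lt⟩)
    rintro ⟨z₁, h₁, e₁⟩ ⟨z₂, h₂, e₂⟩ h
    simp only [Fin.mk.injEq, Subtype.mk.injEq] at h ⊢
    apply ZMod.val_injective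
    calc z₁.val = n₁ * (z₁.val / n₁) + z₁.val % n₁ := (Nat.div_add_mod _ _).symm
    _ = n₁ * (z₂.val / n₁) + z₂.val % n₁ := by rw [h, e₁, e₂]
    _ = z₂.val := Nat.div_add_mod _ _
  simpa using this

lemma val_pow_dvd {n k : ℕ} [NeZero n] (z : ZMod n) (hz : z ^ k = 1) :
    (n:ℤ) ∣ (z.val:ℤ)^k - 1 := by
  have : (((z.val:ℤ)^k - 1 : ℤ) : ZMod n) = 0 := by
    push_cast
    simp [ZMod.natCast_val, ZMod.cast_id, hz]
  exact (ZMod.intCast_zmod_eq_zero_iff_dvd _ _).mp this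

lemma cast_one_dvd {n q : ℕ} [NeZero n] (hd : q ∣ n) (z : ZMod n)
    (h : ZMod.castHom hd (ZMod q) z = 1) : (q:ℤ) ∣ (z.val:ℤ) - 1 := by
  have h2 : ((z.val : ℤ) : ZMod q) = 1 := by
    have : ((z.val : ℕ) : ZMod q) = ZMod.castHom hd (ZMod q) z := by
      rw [← map_natCast (ZMod.castHom hd (ZMod q)) z.val]
      simp [ZMod.natCast_val, ZMod.cast_id]
    push_cast [this, h]
    rfl
  have : (((z.val:ℤ) - 1 : ℤ) : ZMod q) = 0 := by push_cast [h2]; ring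
  exact (ZMod.intCast_zmod_eq_zero_iff_dvd _ _).mp this

lemma count_of_cond {n n₁ : ℕ} (hn : n ≠ 0) (hd : n₁ ∣ n) (P : ZMod n → Prop)
    (h : ∀ z, P z → z.val % n₁ = 1 % n₁) : Nat.card {z : ZMod n // P z} ≤ n / n₁ := by
  haveI : NeZero n := ⟨hn⟩
  have step : Nat.card {z : ZMod n // P z}
      ≤ Nat.card {z : ZMod n // P z ∧ z.val % n₁ = 1 % n₁} := by
    apply Nat.card_le_card_of_injective (fun z => ⟨z.1, z.2, h z.1 z.2⟩)
    rintro ⟨z₁, h₁⟩ ⟨z₂, h₂⟩ hh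
    simpa using congrArg Subtype.val hh
  exact step.trans (count_class n n₁ hn hd P)

-- convert int divisibility to the val % n₁ condition
lemma dvd_to_mod {m n₁ : ℕ} (h : (n₁:ℤ) ∣ (m:ℤ) - 1) : m % n₁ = 1 % n₁ := by
  have : (1:ℕ) ≡ m [MOD n₁] := Nat.modEq_iff_dvd.mpr (by exact_mod_cast h)
  exact this.symm

lemma roots_field_bound (p k : ℕ) (hp : p.Prime) (hk : 0 < k) :
    Nat.card {c : ZMod p // c ^ k = 1} ≤ k := by
  haveI : Fact p.Prime := ⟨hp⟩
  have : Nat.card {c : ZMod p // c ^ k = 1}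
      ≤ Nat.card {x // x ∈ (Polynomial.nthRoots k (1 : ZMod p)).toFinset} := by
    apply Nat.card_le_card_of_injective
      (fun c => ⟨c.1, by
        simp only [Multiset.mem_toFinset]
        exact (Polynomial.mem_nthRoots hk).mpr c.2⟩)
    rintro ⟨c₁, h₁⟩ ⟨c₂, h₂⟩ h
    simpa using h
  refine this.trans ?_
  rw [Nat.card_eq_fintype_card, Fintype.card_coe]
  exact (Multiset.toFinset_card_le _).trans (Polynomial.card_nthRoots k (1 : ZMod p))


lemma fiber_odd (p e k : ℕ) (hp : p.Prime) (hodd : Odd p) (he : 0 < e) (hk : 0 < k) :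
    Nat.card {z : ZMod (p^e) // z ^ k = 1 ∧
      ZMod.castHom (dvd_pow_self p he.ne') (ZMod p) z = 1} ≤ k := by
  haveI : NeZero (p^e) := ⟨pow_ne_zero e hp.pos.ne'⟩
  have hfin : FiniteMultiplicity p k := Nat.finiteMultiplicity_iff.mpr ⟨hp.ne_one, hk⟩
  set v := multiplicity p k with hv
  have hpv : p ^ v ∣ k := pow_multiplicity_dvd p k
  have hvk : p ^ v ≤ k := Nat.le_of_dvd hk hpv
  by_cases hev : e ≤ v
  · calc Nat.card {z : ZMod (p^e) // z ^ k = 1 ∧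
        ZMod.castHom (dvd_pow_self p he.ne') (ZMod p) z = 1}
        ≤ Nat.card (ZMod (p^e)) := Nat.card_le_card_of_injective _ Subtype.val_injective
    _ = p ^ e := Nat.card_zmod _
    _ ≤ p ^ v := Nat.pow_le_pow_right hp.pos hev
    _ ≤ k := hvk
  · push_neg at hev
    have key : ∀ z : ZMod (p^e), (z ^ k = 1 ∧
        ZMod.castHom (dvd_pow_self p he.ne') (ZMod p) z = 1) →
        z.val % p^(e-v) = 1 % p^(e-v) := by
      rintro z ⟨hz1, hz2⟩
      apply dvd_to_mod
      have h1 : ((p:ℤ))^e ∣ (z.val:ℤ)^k - 1 := by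
        have := val_pow_dvd z hz1; push_cast at this ⊢; exact this
      have h2 : (p:ℤ) ∣ (z.val:ℤ) - 1 := cast_one_dvd _ z hz2
      have hnp : ¬ (p:ℤ) ∣ (z.val:ℤ) := by
        intro hd
        have : (p:ℤ) ∣ 1 := (dvd_sub_right hd).mp (by simpa using h2)
        exact hp.one_lt.ne' (by exact_mod_cast Int.eq_one_of_dvd_one (by positivity) this)
      have lte := Int.emultiplicity_pow_sub_pow hp hodd (y := 1) (by simpa using h2) hnp k
      rw [one_pow] at lte
      have hle : (e : ℕ∞) ≤ emultiplicity ((p:ℤ)) ((z.val:ℤ) - 1) + (v : ℕ∞) := by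
        rw [← hfin.emultiplicity_eq_multiplicity, ← lte]
        exact le_emultiplicity_of_pow_dvd h1
      have hle2 : ((e - v : ℕ) : ℕ∞) ≤ emultiplicity ((p:ℤ)) ((z.val:ℤ) - 1) := by
        have h3 : (e:ℕ∞) - (v:ℕ∞) ≤ emultiplicity ((p:ℤ)) ((z.val:ℤ) - 1) :=
          tsub_le_iff_right.mpr hle
        refine le_trans (le_of_eq ?_) h3
        exact_mod_cast (ENat.coe_sub e v)
      have := pow_dvd_of_le_emultiplicity hle2
      push_cast at this ⊢
      exact this
    have := count_of_cond (n := p^e) (n₁ := p^(e-v)) (pow_ne_zero e hp.pos.ne')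
      (pow_dvd_pow p (Nat.sub_le e v)) _ key
    calc Nat.card {z : ZMod (p^e) // z ^ k = 1 ∧
        ZMod.castHom (dvd_pow_self p he.ne') (ZMod p) z = 1}
        ≤ p^e / p^(e-v) := this
    _ = p ^ v := by rw [Nat.pow_div (Nat.sub_le e v) hp.pos, Nat.sub_sub_self hev.le]
    _ ≤ k := hvk

lemma fiber_two (e k : ℕ) (he : 2 ≤ e) (hk : 0 < k) :
    Nat.card {z : ZMod (2^e) // z ^ k = 1 ∧
      ZMod.castHom (pow_dvd_pow 2 he) (ZMod (2^2)) z = 1} ≤ k := by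
  haveI : NeZero (2^e) := ⟨pow_ne_zero e two_ne_zero⟩
  have hp : Nat.Prime 2 := Nat.prime_two
  have hfin : FiniteMultiplicity 2 k := Nat.finiteMultiplicity_iff.mpr ⟨hp.ne_one, hk⟩
  set v := multiplicity 2 k with hv
  have hpv : 2 ^ v ∣ k := pow_multiplicity_dvd 2 k
  have hvk : 2 ^ v ≤ k := Nat.le_of_dvd hk hpv
  by_cases hev : e ≤ v
  · calc Nat.card {z : ZMod (2^e) // z ^ k = 1 ∧
        ZMod.castHom (pow_dvd_pow 2 he) (ZMod (2^2)) z = 1}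
        ≤ Nat.card (ZMod (2^e)) := Nat.card_le_card_of_injective _ Subtype.val_injective
    _ = 2 ^ e := Nat.card_zmod _
    _ ≤ 2 ^ v := Nat.pow_le_pow_right hp.pos hev
    _ ≤ k := hvk
  · push_neg at hev
    have key : ∀ z : ZMod (2^e), (z ^ k = 1 ∧
        ZMod.castHom (pow_dvd_pow 2 he) (ZMod (2^2)) z = 1) →
        z.val % 2^(e-v) = 1 % 2^(e-v) := by
      rintro z ⟨hz1, hz2⟩
      apply dvd_to_mod
      have h1 : ((2:ℤ))^e ∣ (z.val:ℤ)^k - 1 := by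
        have := val_pow_dvd z hz1; push_cast at this ⊢; exact this
      have h2 : (4:ℤ) ∣ (z.val:ℤ) - 1 := by
        have h := cast_one_dvd (pow_dvd_pow 2 he) z hz2
        have h4 : ((2^2:ℕ):ℤ) = 4 := by norm_num
        rwa [h4] at h
      have hnp : ¬ (2:ℤ) ∣ (z.val:ℤ) := by
        intro hd
        have h4 : (2:ℤ) ∣ (z.val:ℤ) - 1 := dvd_trans (by norm_num) h2
        have : (2:ℤ) ∣ 1 := (dvd_sub_right hd).mp (by simpa using h4)
        norm_num at this
      have lte := Int.two_pow_sub_pow' (x := (z.val:ℤ)) (y := 1) k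
        (by simpa using h2) hnp
      rw [one_pow] at lte
      have lte' : emultiplicity ((2:ℤ)) ((z.val:ℤ)^k - 1)
          = emultiplicity ((2:ℤ)) ((z.val:ℤ) - 1) + (v : ℕ∞) := by
        rw [lte, ← hfin.emultiplicity_eq_multiplicity, ← Int.natCast_emultiplicity]
        norm_num
      have hle : (e : ℕ∞) ≤ emultiplicity ((2:ℤ)) ((z.val:ℤ) - 1) + (v : ℕ∞) := by
        rw [← lte']
        apply le_emultiplicity_of_pow_dvd
        exact_mod_cast h1
      have hle2 : ((e - v : ℕ) : ℕ∞) ≤ emultiplicity ((2:ℤ)) ((z.val:ℤ) - 1) := by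
        have h3 : (e:ℕ∞) - (v:ℕ∞) ≤ emultiplicity ((2:ℤ)) ((z.val:ℤ) - 1) :=
          tsub_le_iff_right.mpr hle
        refine le_trans (le_of_eq ?_) h3
        exact_mod_cast (ENat.coe_sub e v)
      have := pow_dvd_of_le_emultiplicity hle2
      push_cast at this ⊢
      exact this
    have := count_of_cond (n := 2^e) (n₁ := 2^(e-v)) (pow_ne_zero e two_ne_zero)
      (pow_dvd_pow 2 (Nat.sub_le e v)) _ key
    calc Nat.card {z : ZMod (2^e) // z ^ k = 1 ∧
        ZMod.castHom (pow_dvd_pow 2 he) (ZMod (2^2)) z = 1}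
        ≤ 2^e / 2^(e-v) := this
    _ = 2 ^ v := by rw [Nat.pow_div (Nat.sub_le e v) hp.pos, Nat.sub_sub_self hev.le]
    _ ≤ k := hvk


lemma fiber_split {n q : ℕ} (hn : n ≠ 0) (hq : q ≠ 0) (hd : q ∣ n) (k : ℕ) (hk : 0 < k) :
    Nat.card {u : ZMod n // u^k = 1} ≤
      Nat.card {c : ZMod q // c^k = 1} *
      Nat.card {z : ZMod n // z^k = 1 ∧ ZMod.castHom hd (ZMod q) z = 1} := by
  haveI : NeZero n := ⟨hn⟩
  haveI : NeZero q := ⟨hq⟩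
  set π := ZMod.castHom hd (ZMod q) with hπ
  classical
  let τ : ZMod q → ZMod n := fun c =>
    if h : ∃ t : ZMod n, t^k = 1 ∧ π t = c then Classical.choose h else 1
  have hτ : ∀ c : ZMod q, (∃ t : ZMod n, t^k = 1 ∧ π t = c) →
      (τ c)^k = 1 ∧ π (τ c) = c := by
    intro c h
    simp only [τ, dif_pos h]
    exact Classical.choose_spec h
  have key : Nat.card {u : ZMod n // u^k = 1} ≤
      Nat.card ({c : ZMod q // c^k = 1} ×
        {z : ZMod n // z^k = 1 ∧ π z = 1}) := by
    apply Nat.card_le_card_of_injective (fun u =>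
      (⟨π u.1, by rw [← map_pow, u.2, map_one]⟩,
       ⟨u.1 * (τ (π u.1))^(k-1), by
        obtain ⟨ht1, ht2⟩ := hτ (π u.1) ⟨u.1, u.2, rfl⟩
        constructor
        · rw [mul_pow, u.2, one_mul, ← pow_mul, mul_comm (k-1) k, pow_mul, ht1, one_pow]
        · rw [map_mul, map_pow, ht2, ← pow_succ', Nat.sub_add_cancel hk,
            ← map_pow, u.2, map_one]⟩))
    rintro ⟨u₁, h₁⟩ ⟨u₂, h₂⟩ h
    simp only [Prod.mk.injEq, Subtype.mk.injEq] at h ⊢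
    obtain ⟨hc, hz⟩ := h
    rw [hc] at hz
    obtain ⟨ht1, -⟩ := hτ (π u₂) ⟨u₂, h₂, rfl⟩
    have := congrArg (· * τ (π u₂)) hz
    simpa [mul_assoc, ← pow_succ, Nat.sub_add_cancel hk, ht1] using this
  simpa [Nat.card_prod] using key

lemma local_bound (k p e : ℕ) (hk : 3 ≤ k) (hp : p.Prime) (he : 0 < e) :
    Nat.card {r : ZMod (p^e) // r^k = -1} ≤ 2*k^2 := by
  haveI : NeZero (p^e) := ⟨pow_ne_zero e hp.pos.ne'⟩
  have hk0 : 0 < k := by omega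
  rcases isEmpty_or_nonempty {r : ZMod (p^e) // r^k = -1} with hE | ⟨⟨r₀, hr₀⟩⟩
  · simp [Nat.card_of_isEmpty]
  · have hs : r₀ * (-r₀^(k-1)) = 1 := by
      have : r₀ * r₀^(k-1) = r₀^k := by
        rw [← pow_succ', Nat.sub_add_cancel hk0]
      rw [mul_neg, this, hr₀, neg_neg]
    have hsk : (-r₀^(k-1))^k = -1 := by
      have h1 : ((-1:ZMod (p^e)))^(2*k-1) = -1 := Odd.neg_one_pow ⟨k-1, by omega⟩
      calc (-r₀^(k-1))^k = (-1)^k * (r₀^k)^(k-1) := by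
            rw [neg_pow, ← pow_mul, mul_comm (k-1) k, pow_mul]
      _ = (-1)^k * (-1)^(k-1) := by rw [hr₀]
      _ = -1 := by rw [← pow_add, show k + (k-1) = 2*k-1 by omega, h1]
    have step1 : Nat.card {r : ZMod (p^e) // r^k = -1}
        ≤ Nat.card {u : ZMod (p^e) // u^k = 1} := by
      apply Nat.card_le_card_of_injective (fun r =>
        ⟨r.1 * (-r₀^(k-1)), by rw [mul_pow, r.2, hsk, neg_mul_neg, one_mul]⟩)
      rintro ⟨u₁, h₁⟩ ⟨u₂, h₂⟩ h
      simp only [Subtype.mk.injEq] at h ⊢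
      have := congrArg (· * r₀) h
      simp only [mul_assoc] at this
      rwa [mul_comm (-r₀^(k-1)) r₀, hs, mul_one, mul_one] at this
    refine step1.trans ?_
    rcases eq_or_ne p 2 with rfl | hp2
    · rcases eq_or_lt_of_le (show 1 ≤ e by omega) with he1 | he2
      · calc Nat.card {u : ZMod (2^e) // u^k = 1} ≤ Nat.card (ZMod (2^e)) :=
            Nat.card_le_card_of_injective _ Subtype.val_injective
        _ = 2^e := Nat.card_zmod _
        _ ≤ 2*k^2 := by rw [← he1]; nlinarith
      · have he2' : 2 ≤ e := he2
        calc Nat.card {u : ZMod (2^e) // u^k = 1}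
            ≤ Nat.card {c : ZMod (2^2) // c^k = 1} *
              Nat.card {z : ZMod (2^e) // z^k = 1 ∧
                ZMod.castHom (pow_dvd_pow 2 he2') (ZMod (2^2)) z = 1} :=
              fiber_split (pow_ne_zero e two_ne_zero) (by norm_num)
                (pow_dvd_pow 2 he2') k hk0
        _ ≤ Nat.card (ZMod (2^2)) * k := by
              apply Nat.mul_le_mul
              · exact Nat.card_le_card_of_injective _ Subtype.val_injective
              · exact fiber_two e k he2' hk0
        _ = 4 * k := by rw [Nat.card_zmod]; norm_num
        _ ≤ 2*k^2 := by nlinarith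
    · have hodd : Odd p := hp.odd_of_ne_two hp2
      calc Nat.card {u : ZMod (p^e) // u^k = 1}
          ≤ Nat.card {c : ZMod p // c^k = 1} *
            Nat.card {z : ZMod (p^e) // z^k = 1 ∧
              ZMod.castHom (dvd_pow_self p he.ne') (ZMod p) z = 1} :=
            fiber_split (pow_ne_zero e hp.pos.ne') hp.pos.ne'
              (dvd_pow_self p he.ne') k hk0
      _ ≤ k * k := Nat.mul_le_mul (roots_field_bound p k hp hk0)
            (fiber_odd p e k hp hodd he hk0)
      _ ≤ 2*k^2 := by nlinarith


lemma card_le_one_of_subsing (α : Type*) [Subsingleton α] : Nat.card α ≤ 1 := by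
  rcases isEmpty_or_nonempty α with h | h
  · simp [Nat.card_of_isEmpty]
  · haveI := uniqueOfSubsingleton (Classical.arbitrary α)
    simp [Nat.card_unique]

lemma mult_card (k a b : ℕ) (hab : a.Coprime b) :
    Nat.card {r : ZMod (a*b) // r^k = -1}
      = Nat.card {r : ZMod a // r^k = -1} * Nat.card {r : ZMod b // r^k = -1} := by
  have E := ZMod.chineseRemainder hab
  have e1 : {r : ZMod (a*b) // r^k = -1} ≃ {x : ZMod a × ZMod b // x^k = -1} :=
    Equiv.subtypeEquiv E.toEquiv (fun r => by
      constructor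
      · intro h
        show (E r)^k = -1
        rw [← map_pow, h, map_neg, map_one]
      · intro h
        have : E (r^k) = E (-1) := by rw [map_pow, map_neg, map_one]; exact h
        exact E.injective this)
  have e2 : {x : ZMod a × ZMod b // x^k = -1}
      ≃ {r : ZMod a // r^k = -1} × {r : ZMod b // r^k = -1} := by
    refine (Equiv.subtypeEquivRight (fun x => ?_)).trans
      (Equiv.subtypeProdEquivProd)
    constructor
    · intro h
      exact ⟨congrArg Prod.fst h, congrArg Prod.snd h⟩
    · rintro ⟨h1, h2⟩
      exact Prod.ext h1 h2
  rw [Nat.card_congr (e1.trans e2), Nat.card_prod]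

lemma global_bound (k : ℕ) (hk : 3 ≤ k) (N : ℕ) :
    Nat.card {r : ZMod N // r^k = -1} ≤ (2*k^2) ^ N.primeFactors.card := by
  have hsub : Nat.card {r : ℤ // r^k = -1} ≤ 1 := by
    have hss : Subsingleton {r : ℤ // r^k = -1} := by
      constructor
      rintro ⟨r, hr⟩ ⟨s, hs⟩
      have hodd : Odd k := by
        rcases Nat.even_or_odd k with he | ho
        · exfalso
          obtain ⟨m, hm⟩ := he
          have h0 : (0:ℤ) ≤ r^k := by rw [hm, ← two_mul, pow_mul]; positivity
          rw [hr] at h0; norm_num at h0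
        · exact ho
      have : r = s := hodd.strictMono_pow.injective (by rw [hr, hs])
      simp [this]
    exact card_le_one_of_subsing _
  induction N using Nat.recOnPosPrimePosCoprime with
  | prime_pow p n hp hn =>
      rw [Nat.primeFactors_prime_pow hn.ne' hp, Finset.card_singleton, pow_one]
      exact local_bound k p n hk hp hn
  | zero => simp only [Nat.primeFactors_zero, Finset.card_empty, pow_zero]; exact hsub
  | one =>
      have : Subsingleton {r : ZMod 1 // r^k = -1} := ⟨by
        rintro ⟨r, hr⟩ ⟨s, hs⟩; simp [Subsingleton.elim r s]⟩
      simpa using card_le_one_of_subsing {r : ZMod 1 // r^k = -1}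
  | coprime a b ha hb hab iha ihb =>
      rw [mult_card k a b hab, Nat.Coprime.primeFactors_mul hab,
        Finset.card_union_of_disjoint hab.disjoint_primeFactors, pow_add]
      exact Nat.mul_le_mul iha ihb


lemma sol_inj (k N : ℕ) (hk : 3 ≤ k) (hN : 1 ≤ N) :
    Nat.card {ab : ℕ × ℕ // 0 < ab.1 ∧ 0 < ab.2 ∧ Nat.Coprime ab.1 ab.2 ∧
      ab.1 ^ k + ab.2 ^ k = N}
      ≤ Nat.card {r : ZMod N // r^k = -1} := by
  haveI : NeZero N := ⟨by omega⟩
  have hk0 : 0 < k := by omega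
  have hcop : ∀ a b : ℕ, a.Coprime b → a^k + b^k = N → b.Coprime N := by
    intro a b hco hsum
    have h1 : Nat.Coprime b (a^k) := hco.symm.pow_right k
    have h2 : Nat.Coprime b (a^k + b^(k-1) * b) :=
      (Nat.coprime_add_mul_right_right b (a^k) (b^(k-1))).mpr h1
    rwa [← pow_succ, Nat.sub_add_cancel hk0, hsum] at h2
  have hbound : ∀ a₁ b₁ a₂ b₂ : ℕ, 0 < a₁ → 0 < b₁ → 0 < a₂ → 0 < b₂ →
      a₁^k + b₁^k = N → a₂^k + b₂^k = N → a₁ * b₂ < N := by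
    intro a₁ b₁ a₂ b₂ ha₁ hb₁ ha₂ hb₂ h₁ h₂
    by_contra hcon
    push_neg at hcon
    have hN2 : 2 ≤ N := by
      have := Nat.one_le_pow k a₁ ha₁; have := Nat.one_le_pow k b₁ hb₁; omega
    have e1 : a₁^k ≤ N - 1 := by have := Nat.one_le_pow k b₁ hb₁; omega
    have e2 : b₂^k ≤ N - 1 := by have := Nat.one_le_pow k a₂ ha₂; omega
    have c1 : N^2 ≤ N^k := Nat.pow_le_pow_right (by omega) (by omega)
    have c2 : N^k ≤ (a₁*b₂)^k := Nat.pow_le_pow_left hcon k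
    have c3 : (a₁*b₂)^k = a₁^k * b₂^k := mul_pow a₁ b₂ k
    have c4 : a₁^k * b₂^k ≤ (N-1)*(N-1) := Nat.mul_le_mul e1 e2
    obtain ⟨M, rfl⟩ : ∃ M, N = M + 1 := ⟨N-1, by omega⟩
    have c5 : (M+1-1)*(M+1-1) < (M+1)^2 := by simp; nlinarith
    omega
  apply Nat.card_le_card_of_injective (fun x =>
    ⟨(x.1.1 : ZMod N) *
      ↑(ZMod.unitOfCoprime x.1.2 (hcop x.1.1 x.1.2 x.2.2.2.1 x.2.2.2.2))⁻¹, by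
      obtain ⟨⟨a, b⟩, ha, hb, hco, hsum⟩ := x
      simp only
      set β := ZMod.unitOfCoprime b (hcop a b hco hsum) with hβdef
      have hβ : (β : ZMod N) = (b : ZMod N) := ZMod.coe_unitOfCoprime b _
      have h2 : (a:ZMod N)^k = -((b:ZMod N))^k := by
        have hc := congrArg (Nat.cast : ℕ → ZMod N) hsum
        push_cast at hc
        rw [ZMod.natCast_self] at hc
        linear_combination hc
      have hb1 : (b:ZMod N) * (↑β⁻¹:ZMod N) = 1 := by
        rw [← hβ, ← Units.val_mul, mul_inv_cancel, Units.val_one]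
      calc ((a:ZMod N) * ↑β⁻¹)^k = (a:ZMod N)^k * (↑β⁻¹:ZMod N)^k := mul_pow _ _ _
      _ = -((b:ZMod N)^k * (↑β⁻¹:ZMod N)^k) := by rw [h2]; ring
      _ = -(((b:ZMod N) * ↑β⁻¹)^k) := by rw [mul_pow]
      _ = -1 := by rw [hb1, one_pow]⟩)
  rintro ⟨⟨a₁, b₁⟩, ha₁, hb₁, hco₁, hs₁⟩ ⟨⟨a₂, b₂⟩, ha₂, hb₂, hco₂, hs₂⟩ h
  simp only [Subtype.mk.injEq] at h
  set β₁ := ZMod.unitOfCoprime b₁ (hcop a₁ b₁ hco₁ hs₁) with hβ₁def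
  set β₂ := ZMod.unitOfCoprime b₂ (hcop a₂ b₂ hco₂ hs₂) with hβ₂def
  have hβ₁ : (β₁ : ZMod N) = (b₁ : ZMod N) := ZMod.coe_unitOfCoprime b₁ _
  have hβ₂ : (β₂ : ZMod N) = (b₂ : ZMod N) := ZMod.coe_unitOfCoprime b₂ _
  have k₁ : (↑β₁⁻¹:ZMod N) * ↑β₁ = 1 := by
    rw [← Units.val_mul, inv_mul_cancel, Units.val_one]
  have k₂ : (↑β₂⁻¹:ZMod N) * ↑β₂ = 1 := by
    rw [← Units.val_mul, inv_mul_cancel, Units.val_one]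
  have hmul : (a₁:ZMod N) * (b₂:ZMod N) = (a₂:ZMod N) * (b₁:ZMod N) := by
    calc (a₁:ZMod N) * (b₂:ZMod N) = (a₁:ZMod N) * ((↑β₁⁻¹:ZMod N) * ↑β₁) * ↑β₂ := by
          rw [k₁, hβ₂]; ring
    _ = ((a₁:ZMod N) * ↑β₁⁻¹) * (↑β₁ * ↑β₂) := by ring
    _ = ((a₂:ZMod N) * ↑β₂⁻¹) * (↑β₁ * ↑β₂) := by rw [h]
    _ = (a₂:ZMod N) * ((↑β₂⁻¹:ZMod N) * ↑β₂) * ↑β₁ := by ring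
    _ = (a₂:ZMod N) * (b₁:ZMod N) := by rw [k₂, hβ₁]; ring
  have hmod : a₁ * b₂ ≡ a₂ * b₁ [MOD N] := by
    rw [← ZMod.natCast_eq_natCast_iff]
    push_cast
    exact hmul
  have heq : a₁ * b₂ = a₂ * b₁ :=
    hmod.eq_of_lt_of_lt (hbound a₁ b₁ a₂ b₂ ha₁ hb₁ ha₂ hb₂ hs₁ hs₂)
      (hbound a₂ b₂ a₁ b₁ ha₂ hb₂ ha₁ hb₁ hs₂ hs₁)
  have hd₁ : a₁ ∣ a₂ := hco₁.dvd_of_dvd_mul_right ⟨b₂, heq.symm⟩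
  have hd₂ : a₂ ∣ a₁ := hco₂.dvd_of_dvd_mul_right ⟨b₁, heq⟩
  have haa : a₁ = a₂ := Nat.dvd_antisymm hd₁ hd₂
  have hbb : b₂ = b₁ := by
    apply Nat.eq_of_mul_eq_mul_left ha₁
    rw [heq, haa]
  exact Subtype.ext (Prod.ext haa hbb.symm)


lemma eps_bound (C : ℕ) (hC : 1 ≤ C) (ε : ℝ) (hε : 0 < ε) :
    ∃ C' : ℝ, ∀ N : ℕ, 1 ≤ N →
      ((C:ℝ)) ^ (1 + N.primeFactors.card) ≤ C' * (N:ℝ)^ε := by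
  set n := max 1 ⌈1/ε⌉₊ with hn
  have hn1 : 1 ≤ n := le_max_left _ _
  have hnε : 1/ε ≤ (n:ℝ) := le_trans (Nat.le_ceil _) (by exact_mod_cast le_max_right _ _)
  set B := C^n with hB
  refine ⟨(C:ℝ)^(B+2), fun N hN => ?_⟩
  have hC1 : (1:ℝ) ≤ (C:ℝ) := by exact_mod_cast hC
  set s := (N.primeFactors.filter (fun p => p ≤ B)).card with hs
  set l := (N.primeFactors.filter (fun p => ¬ p ≤ B)).card with hl
  have hsplit : s + l = N.primeFactors.card :=
    Finset.card_filter_add_card_filter_not _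
  have hsB : s ≤ B + 1 := by
    have hsub : N.primeFactors.filter (fun p => p ≤ B) ⊆ Finset.Iic B := by
      intro p hp
      simp only [Finset.mem_filter] at hp
      exact Finset.mem_Iic.mpr hp.2
    calc s ≤ (Finset.Iic B).card := Finset.card_le_card hsub
    _ = B + 1 := by simp
  have hBl : (B+1)^l ≤ N := by
    have hd : (N.primeFactors.filter (fun p => ¬ p ≤ B)).prod id ∣ N :=
      dvd_trans (Finset.prod_dvd_prod_of_subset _ _ id (Finset.filter_subset _ _))
        (by simpa using Nat.prod_primeFactors_dvd N)
    have hprod : (B+1)^l ≤ (N.primeFactors.filter (fun p => ¬ p ≤ B)).prod id := by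
      apply Finset.pow_card_le_prod
      intro p hp
      simp only [Finset.mem_filter, id] at hp ⊢
      omega
    exact hprod.trans (Nat.le_of_dvd (by omega) hd)
  -- C^l ≤ N^ε
  have hx : ((C:ℝ)^l) ≤ (N:ℝ)^ε := by
    have hN1 : (1:ℝ) ≤ (N:ℝ) := by exact_mod_cast hN
    have h1 : ((C:ℝ)^l)^(n:ℕ) ≤ (N:ℝ) := by
      have : ((B+1:ℕ)^l : ℕ) ≤ N := hBl
      calc ((C:ℝ)^l)^(n:ℕ) = ((C:ℝ)^n)^l := by rw [← pow_mul, ← pow_mul, mul_comm]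
      _ = ((B:ℕ):ℝ)^l := by rw [hB]; push_cast; ring
      _ ≤ ((B+1:ℕ):ℝ)^l := by
          apply pow_le_pow_left₀ (by positivity)
          exact_mod_cast Nat.le_succ B
      _ ≤ (N:ℝ) := by exact_mod_cast hBl
    have h2 : (((C:ℝ)^l)^(n:ℕ))^((1:ℝ)/n) ≤ (N:ℝ)^((1:ℝ)/n) :=
      Real.rpow_le_rpow (by positivity) h1 (by positivity)
    have h3 : (((C:ℝ)^l)^(n:ℕ))^((1:ℝ)/n) = (C:ℝ)^l := by
      rw [← Real.rpow_natCast ((C:ℝ)^l) n, ← Real.rpow_mul (by positivity)]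
      rw [mul_one_div, div_self (by positivity : (n:ℝ) ≠ 0), Real.rpow_one]
    have h4 : (N:ℝ)^((1:ℝ)/n) ≤ (N:ℝ)^ε := by
      apply Real.rpow_le_rpow_of_exponent_le hN1
      rw [div_le_iff₀ (by positivity : (0:ℝ) < (n:ℝ))]
      calc (1:ℝ) = ε * (1/ε) := by field_simp
      _ ≤ ε * n := by nlinarith
    calc (C:ℝ)^l = (((C:ℝ)^l)^(n:ℕ))^((1:ℝ)/n) := h3.symm
    _ ≤ (N:ℝ)^((1:ℝ)/n) := h2
    _ ≤ (N:ℝ)^ε := h4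
  calc ((C:ℝ)) ^ (1 + N.primeFactors.card) = (C:ℝ)^(1+s) * (C:ℝ)^l := by
        rw [← pow_add]; congr 1; omega
  _ ≤ (C:ℝ)^(B+2) * (N:ℝ)^ε := by
      apply mul_le_mul _ hx (by positivity) (by positivity)
      exact pow_le_pow_right₀ hC1 (by omega)

theorem stmt_15 (k : ℕ) (hk : 3 ≤ k) :
    (∃ C : ℕ, ∀ N : ℕ, 1 ≤ N →
      Nat.card {ab : ℕ × ℕ // 0 < ab.1 ∧ 0 < ab.2 ∧ Nat.Coprime ab.1 ab.2 ∧
        ab.1 ^ k + ab.2 ^ k = N} ≤ C ^ (1 + N.primeFactors.card)) ∧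
    ∀ ε : ℝ, 0 < ε → ∃ C' : ℝ, ∀ N : ℕ, 1 ≤ N →
      (Nat.card {ab : ℕ × ℕ // 0 < ab.1 ∧ 0 < ab.2 ∧ Nat.Coprime ab.1 ab.2 ∧
        ab.1 ^ k + ab.2 ^ k = N} : ℝ) ≤ C' * (N : ℝ) ^ ε := by
  have hC1 : 1 ≤ 2*k^2 := by nlinarith
  have main : ∀ N : ℕ, 1 ≤ N →
      Nat.card {ab : ℕ × ℕ // 0 < ab.1 ∧ 0 < ab.2 ∧ Nat.Coprime ab.1 ab.2 ∧
        ab.1 ^ k + ab.2 ^ k = N} ≤ (2*k^2) ^ (1 + N.primeFactors.card) := by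
    intro N hN
    calc Nat.card {ab : ℕ × ℕ // 0 < ab.1 ∧ 0 < ab.2 ∧ Nat.Coprime ab.1 ab.2 ∧
        ab.1 ^ k + ab.2 ^ k = N}
        ≤ Nat.card {r : ZMod N // r^k = -1} := sol_inj k N hk hN
    _ ≤ (2*k^2) ^ N.primeFactors.card := global_bound k hk N
    _ ≤ (2*k^2) ^ (1 + N.primeFactors.card) :=
        Nat.pow_le_pow_right (by omega) (by omega)
  refine ⟨⟨2*k^2, main⟩, ?_⟩
  intro ε hε
  obtain ⟨C', hC'⟩ := eps_bound (2*k^2) hC1 ε hε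
  refine ⟨C', fun N hN => ?_⟩
  calc (Nat.card {ab : ℕ × ℕ // 0 < ab.1 ∧ 0 < ab.2 ∧ Nat.Coprime ab.1 ab.2 ∧
        ab.1 ^ k + ab.2 ^ k = N} : ℝ)
      ≤ (((2*k^2) ^ (1 + N.primeFactors.card) : ℕ) : ℝ) := by exact_mod_cast main N hN
  _ = ((2*k^2 : ℕ):ℝ) ^ (1 + N.primeFactors.card) := by push_cast; ring
  _ ≤ C' * (N:ℝ)^ε := hC' N hN
end
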